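/- arXiv:1109.5845 — 7 statements merged into one kernel-verified Lean document; each statement's English description precedes it below -/
import Mathlib

section
/- Let X = (X_1,...,X_n) and Y = (Y_1,...,Y_n) be vectors of independent Bernoulli random variables with success probabilities p_1,...,p_n and q_1,...,q_n respectively, where 0 < p_i ≤ q_i < 1 for all i. Then for every k ∈ {0,1,...,n}, the conditional law of ∑X_i given ∑X_i ≥ k is stochastically dominated by the conditional law of ∑Y_i given ∑Y_i ≥ k. -/
open Finset
open scoped BigOperators Classical

noncomputable section

/-- Weight (probability) of a configuration `x` of `n` independent Bernoulli
variables with success probabilities `p i`. -/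
def bw {n : ℕ} (p : Fin n → ℝ) (x : Fin n → Bool) : ℝ :=
  ∏ i, if x i then p i else 1 - p i

/-- Probability of the event `A` for `n` independent Bernoulli variables. -/
def bpr {n : ℕ} (p : Fin n → ℝ) (A : (Fin n → Bool) → Prop) : ℝ :=
  ∑ x : Fin n → Bool, if A x then bw p x else 0

/-- Number of successes in the configuration `x`. -/
def cnt {n : ℕ} (x : Fin n → Bool) : ℕ := ∑ i, if x i then 1 else 0

/-- Conditional probability mass function given the event `A`. -/
def condPMF {n : ℕ} (p : Fin n → ℝ) (A : (Fin n → Bool) → Prop)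
    (x : Fin n → Bool) : ℝ :=
  (if A x then bw p x else 0) / bpr p A

/-- `dominates μ ν` : the law `μ` on `{0,1}^n` is stochastically dominated by `ν`,
i.e. there is a coupling supported on ordered pairs. -/
def dominates {n : ℕ} (μ ν : (Fin n → Bool) → ℝ) : Prop :=
  ∃ c : (Fin n → Bool) → (Fin n → Bool) → ℝ,
    (∀ x y, 0 ≤ c x y) ∧
    (∀ x, ∑ y : Fin n → Bool, c x y = μ x) ∧
    (∀ y, ∑ x : Fin n → Bool, c x y = ν y) ∧
    (∀ x y, c x y ≠ 0 → x ≤ y)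

-- pmf of the number of successes
def pb {n : ℕ} (p : Fin n → ℝ) (j : ℕ) : ℝ := bpr p (fun x => cnt x = j)

lemma cnt_cons {n : ℕ} (b : Bool) (z : Fin n → Bool) :
    cnt (Fin.cons b z) = (if b then 1 else 0) + cnt z := by
  simp only [cnt, Fin.sum_univ_succ, Fin.cons_zero, Fin.cons_succ]

lemma bw_cons {n : ℕ} (p : Fin (n+1) → ℝ) (b : Bool) (z : Fin n → Bool) :
    bw p (Fin.cons b z) = (if b then p 0 else 1 - p 0) * bw (p ∘ Fin.succ) z := by
  simp [bw, Fin.prod_univ_succ, Function.comp]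

lemma sum_bool_split {n : ℕ} (F : (Fin (n+1) → Bool) → ℝ) :
    ∑ x : Fin (n+1) → Bool, F x
      = ∑ z : Fin n → Bool, (F (Fin.cons false z) + F (Fin.cons true z)) := by
  rw [← (Fin.consEquiv (fun _ : Fin (n+1) => Bool)).sum_comp F]
  rw [Fintype.sum_prod_type_right]
  simp [Fin.consEquiv, add_comm]

lemma cnt_le {n : ℕ} (x : Fin n → Bool) : cnt x ≤ n := by
  classical
  calc cnt x ≤ ∑ _i : Fin n, 1 := Finset.sum_le_sum (fun i _ => by split <;> simp)
  _ = n := by simp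

lemma pb_zero_of_gt {n : ℕ} (p : Fin n → ℝ) {j : ℕ} (h : n < j) : pb p j = 0 := by
  unfold pb bpr
  apply Finset.sum_eq_zero
  intro x _
  have := cnt_le x
  have : cnt x ≠ j := by omega
  simp [this]

lemma pb_rec_zero {n : ℕ} (p : Fin (n+1) → ℝ) :
    pb p 0 = (1 - p 0) * pb (p ∘ Fin.succ) 0 := by
  unfold pb bpr
  rw [sum_bool_split]
  rw [Finset.mul_sum]
  apply Finset.sum_congr rfl
  intro z _
  simp only [cnt_cons, bw_cons]
  simp

lemma pb_rec_succ {n : ℕ} (p : Fin (n+1) → ℝ) (j : ℕ) :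
    pb p (j+1) = (1 - p 0) * pb (p ∘ Fin.succ) (j+1) + p 0 * pb (p ∘ Fin.succ) j := by
  unfold pb bpr
  rw [sum_bool_split, Finset.mul_sum, Finset.mul_sum, ← Finset.sum_add_distrib]
  apply Finset.sum_congr rfl
  intro z _
  simp only [cnt_cons, bw_cons]
  simp only [if_true, if_false, Bool.false_eq_true, zero_add]
  simp only [show ((1 : ℕ) + cnt z = j + 1) ↔ cnt z = j from by omega]
  split <;> split <;> ring

lemma pb_base (p : Fin 0 → ℝ) (j : ℕ) : pb p j = if j = 0 then 1 else 0 := by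
  unfold pb bpr
  rw [Fintype.sum_unique]
  simp only [cnt, bw, Finset.univ_eq_empty, Finset.sum_empty, Finset.prod_empty, eq_comm]

lemma bw_nonneg {n : ℕ} {p : Fin n → ℝ} (hp : ∀ i, 0 ≤ p i ∧ p i ≤ 1)
    (x : Fin n → Bool) : 0 ≤ bw p x := by
  apply Finset.prod_nonneg
  intro i _
  rcases hp i with ⟨h1, h2⟩
  split <;> linarith

lemma pb_nonneg {n : ℕ} {p : Fin n → ℝ} (hp : ∀ i, 0 ≤ p i ∧ p i ≤ 1) (j : ℕ) :
    0 ≤ pb p j := by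
  apply Finset.sum_nonneg
  intro x _
  split
  · exact bw_nonneg hp x
  · exact le_refl 0

lemma pb_pos {n : ℕ} {p : Fin n → ℝ} (hp : ∀ i, 0 < p i ∧ p i < 1) {j : ℕ}
    (hj : j ≤ n) : 0 < pb p j := by
  induction n generalizing j with
  | zero =>
    interval_cases j
    simp [pb_base]
  | succ m ih =>
    have hp' : ∀ i : Fin m, 0 < (p ∘ Fin.succ) i ∧ (p ∘ Fin.succ) i < 1 :=
      fun i => hp (Fin.succ i)
    have hp0 := hp 0
    have hnn : ∀ j, 0 ≤ pb (p ∘ Fin.succ) j :=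
      pb_nonneg (fun i => ⟨le_of_lt (hp' i).1, le_of_lt (hp' i).2⟩)
    cases j with
    | zero =>
      rw [pb_rec_zero]
      have := ih hp' (Nat.zero_le m)
      nlinarith [hp0.1, hp0.2]
    | succ j =>
      rw [pb_rec_succ]
      have h1 : 0 < pb (p ∘ Fin.succ) j := ih hp' (by omega)
      have h2 : 0 ≤ pb (p ∘ Fin.succ) (j+1) := hnn (j+1)
      nlinarith [hp0.1, hp0.2]

/-- pmf extended to the integers. -/
def pbz {n : ℕ} (p : Fin n → ℝ) (j : ℤ) : ℝ := if 0 ≤ j then pb p j.toNat else 0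

lemma pbz_nonneg {n : ℕ} {p : Fin n → ℝ} (hp : ∀ i, 0 ≤ p i ∧ p i ≤ 1) (j : ℤ) :
    0 ≤ pbz p j := by
  unfold pbz; split
  · exact pb_nonneg hp _
  · exact le_refl 0

lemma pbz_pos {n : ℕ} {p : Fin n → ℝ} (hp : ∀ i, 0 < p i ∧ p i < 1) {j : ℤ}
    (h0 : 0 ≤ j) (hj : j ≤ n) : 0 < pbz p j := by
  unfold pbz
  rw [if_pos h0]
  exact pb_pos hp (by omega)

lemma pbz_zero {n : ℕ} (p : Fin n → ℝ) {j : ℤ} (h : j < 0 ∨ (n : ℤ) < j) :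
    pbz p j = 0 := by
  unfold pbz
  rcases h with h | h
  · rw [if_neg (by omega)]
  · split
    · exact pb_zero_of_gt p (by omega)
    · rfl

lemma pbz_base (p : Fin 0 → ℝ) (j : ℤ) : pbz p j = if j = 0 then 1 else 0 := by
  unfold pbz
  rcases lt_trichotomy j 0 with h | h | h
  · rw [if_neg (by omega), if_neg (by omega)]
  · subst h; simp [pb_base]
  · rw [if_pos (by omega), if_neg (by omega), pb_base, if_neg (by omega)]

lemma pbz_rec {n : ℕ} (p : Fin (n+1) → ℝ) (j : ℤ) :
    pbz p j = (1 - p 0) * pbz (p ∘ Fin.succ) j + p 0 * pbz (p ∘ Fin.succ) (j-1) := by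
  unfold pbz
  rcases lt_trichotomy j 0 with h | h | h
  · rw [if_neg (by omega), if_neg (by omega), if_neg (by omega)]; ring
  · subst h
    rw [if_pos le_rfl, if_pos le_rfl, if_neg (by omega)]
    simpa using pb_rec_zero p
  · obtain ⟨m, rfl⟩ : ∃ m : ℕ, j = (m : ℤ) + 1 := ⟨(j-1).toNat, by omega⟩
    rw [if_pos (by omega), if_pos (by omega), if_pos (by omega)]
    have h1 : ((m : ℤ) + 1).toNat = m + 1 := by omega
    have h2 : ((m : ℤ) + 1 - 1).toNat = m := by omega
    rw [h1, h2, pb_rec_succ]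

lemma pbz_logconc {n : ℕ} {p : Fin n → ℝ} (hp : ∀ i, 0 ≤ p i ∧ p i ≤ 1) :
    ∀ a b : ℤ, a ≤ b → pbz p (a-1) * pbz p (b+1) ≤ pbz p a * pbz p b := by
  induction n with
  | zero =>
    intro a b hab
    simp only [pbz_base]
    split_ifs <;> norm_num <;> omega
  | succ m ih =>
    intro a b hab
    have hp' : ∀ i : Fin m, 0 ≤ (p ∘ Fin.succ) i ∧ (p ∘ Fin.succ) i ≤ 1 :=
      fun i => hp (Fin.succ i)
    set c := p 0 with hc
    set G := pbz (p ∘ Fin.succ) with hG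
    have hc0 : 0 ≤ c := (hp 0).1
    have hc1 : c ≤ 1 := (hp 0).2
    rw [pbz_rec p (a-1), pbz_rec p (b+1), pbz_rec p a, pbz_rec p b]
    have e1 : a - 1 - 1 = a - 2 := by ring
    have e2 : b + 1 - 1 = b := by ring
    rw [e1, e2]
    have h1 : G (a-1) * G (b+1) ≤ G a * G b := ih hp' a b hab
    have h2 : G (a-2) * G b ≤ G (a-1) * G (b-1) := by
      have := ih hp' (a-1) (b-1) (by omega)
      have e : a - 1 - 1 = a - 2 := by ring
      have e' : b - 1 + 1 = b := by ring
      rwa [e, e'] at this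
    have hcross : G (a-2) * G (b+1) ≤ G a * G (b-1) := by
      rcases eq_or_lt_of_le hab with rfl | hlt
      · have := ih hp' (a-1) a (by omega)
        have e : a - 1 - 1 = a - 2 := by ring
        rw [e] at this
        calc G (a-2) * G (a+1) ≤ G (a-1) * G a := this
        _ = G a * G (a-1) := by ring
      · have s1 : G (a-2) * G (b+1) ≤ G (a-1) * G b := by
          have := ih hp' (a-1) b (by omega)
          have e : a - 1 - 1 = a - 2 := by ring
          rwa [e] at this
        have s2 : G (a-1) * G b ≤ G a * G (b-1) := by
          have := ih hp' a (b-1) (by omega)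
          have e' : b - 1 + 1 = b := by ring
          rwa [e'] at this
        linarith
    have t1 : 0 ≤ (1-c) * (1-c) * (G a * G b - G (a-1) * G (b+1)) :=
      mul_nonneg (mul_nonneg (by linarith) (by linarith)) (by linarith)
    have t2 : 0 ≤ c * c * (G (a-1) * G (b-1) - G (a-2) * G b) :=
      mul_nonneg (mul_nonneg hc0 hc0) (by linarith)
    have t3 : 0 ≤ c * (1-c) * (G a * G (b-1) - G (a-2) * G (b+1)) :=
      mul_nonneg (mul_nonneg hc0 (by linarith)) (by linarith)
    nlinarith [t1, t2, t3]

lemma pbz_lr {n : ℕ} {p q : Fin n → ℝ}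
    (hpq : ∀ i, 0 < p i ∧ p i ≤ q i ∧ q i < 1) :
    ∀ a b : ℤ, a ≤ b → pbz p b * pbz q a ≤ pbz p a * pbz q b := by
  induction n with
  | zero =>
    intro a b hab
    simp only [pbz_base]
    split_ifs <;> norm_num <;> omega
  | succ m ih =>
    intro a b hab
    have hpq' : ∀ i : Fin m,
        0 < (p ∘ Fin.succ) i ∧ (p ∘ Fin.succ) i ≤ (q ∘ Fin.succ) i ∧ (q ∘ Fin.succ) i < 1 :=
      fun i => hpq (Fin.succ i)
    have hp' : ∀ i : Fin m, 0 ≤ (p ∘ Fin.succ) i ∧ (p ∘ Fin.succ) i ≤ 1 :=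
      fun i => ⟨le_of_lt (hpq' i).1, by linarith [(hpq' i).2.1, (hpq' i).2.2]⟩
    have hq' : ∀ i : Fin m, 0 ≤ (q ∘ Fin.succ) i ∧ (q ∘ Fin.succ) i ≤ 1 :=
      fun i => ⟨by linarith [(hpq' i).1, (hpq' i).2.1], le_of_lt (hpq' i).2.2⟩
    have hq'' : ∀ i : Fin m, 0 < (q ∘ Fin.succ) i ∧ (q ∘ Fin.succ) i < 1 :=
      fun i => ⟨by linarith [(hpq' i).1, (hpq' i).2.1], (hpq' i).2.2⟩
    set c := p 0 with hcdef
    set d := q 0 with hddef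
    have hc0 : 0 < c := (hpq 0).1
    have hcd : c ≤ d := (hpq 0).2.1
    have hd1 : d < 1 := (hpq 0).2.2
    set P := pbz (p ∘ Fin.succ) with hP
    set Q := pbz (q ∘ Fin.succ) with hQ
    have hPnn : ∀ j, 0 ≤ P j := pbz_nonneg hp'
    have hQnn : ∀ j, 0 ≤ Q j := pbz_nonneg hq'
    rw [pbz_rec p a, pbz_rec p b, pbz_rec q a, pbz_rec q b]
    have hIH1 : P b * Q a ≤ P a * Q b := ih hpq' a b hab
    have hIH2 : P (b-1) * Q (a-1) ≤ P (a-1) * Q (b-1) := ih hpq' (a-1) (b-1) (by omega)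
    have hA : P b * Q (a-1) ≤ P a * Q (b-1) := by
      rcases eq_or_lt_of_le hab with rfl | hlt
      · exact le_refl _
      · by_cases hbm : (m : ℤ) < b
        · have : P b = 0 := pbz_zero _ (Or.inr hbm)
          rw [this, zero_mul]
          exact mul_nonneg (hPnn _) (hQnn _)
        · by_cases ha0 : a < 0
          · have : Q (a-1) = 0 := pbz_zero _ (Or.inl (by omega))
            rw [this, mul_zero]
            exact mul_nonneg (hPnn _) (hQnn _)
          · have hQa : 0 < Q a := pbz_pos hq'' (by omega) (by omega)
            have hQb : 0 < Q b := pbz_pos hq'' (by omega) (by omega)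
            have lr : P b * Q a ≤ P a * Q b := hIH1
            have lc : Q (a-1) * Q b ≤ Q a * Q (b-1) := by
              have := pbz_logconc hq' a (b-1) (by omega)
              have e' : b - 1 + 1 = b := by ring
              rwa [e'] at this
            have h4 := mul_le_mul lr lc (mul_nonneg (hQnn _) (hQnn _))
              (mul_nonneg (hPnn _) (hQnn _))
            have h5 : (P b * Q (a-1)) * (Q a * Q b) ≤ (P a * Q (b-1)) * (Q a * Q b) := by
              calc (P b * Q (a-1)) * (Q a * Q b) = (P b * Q a) * (Q (a-1) * Q b) := by ring
              _ ≤ (P a * Q b) * (Q a * Q (b-1)) := h4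
              _ = (P a * Q (b-1)) * (Q a * Q b) := by ring
            exact le_of_mul_le_mul_right h5 (mul_pos hQa hQb)
    have hB : P b * Q (a-1) + P (b-1) * Q a ≤ P a * Q (b-1) + P (a-1) * Q b := by
      rcases eq_or_lt_of_le hab with rfl | hlt
      · linarith
      · have s1 : P (b-1) * Q a ≤ P a * Q (b-1) := ih hpq' a (b-1) (by omega)
        have s2 : P b * Q (a-1) ≤ P (a-1) * Q b := ih hpq' (a-1) b (by omega)
        linarith
    have t1 : 0 ≤ (1-c) * (1-d) * (P a * Q b - P b * Q a) :=
      mul_nonneg (mul_nonneg (by linarith) (by linarith)) (by linarith)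
    have t2 : 0 ≤ c * d * (P (a-1) * Q (b-1) - P (b-1) * Q (a-1)) :=
      mul_nonneg (mul_nonneg (by linarith) (by linarith)) (by linarith)
    have t3 : 0 ≤ c * (1-d) *
        ((P a * Q (b-1) + P (a-1) * Q b) - (P b * Q (a-1) + P (b-1) * Q a)) :=
      mul_nonneg (mul_nonneg (by linarith) (by linarith)) (by linarith)
    have t4 : 0 ≤ (d - c) * (P a * Q (b-1) - P b * Q (a-1)) :=
      mul_nonneg (by linarith) (by linarith)
    nlinarith [t1, t2, t3, t4]

lemma pb_lr {n : ℕ} {p q : Fin n → ℝ}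
    (hpq : ∀ i, 0 < p i ∧ p i ≤ q i ∧ q i < 1) {a b : ℕ} (hab : a ≤ b) :
    pb p b * pb q a ≤ pb p a * pb q b := by
  have := pbz_lr hpq (a : ℤ) (b : ℤ) (by exact_mod_cast hab)
  simpa [pbz] using this

lemma bpr_cnt {n : ℕ} (p : Fin n → ℝ) (A : ℕ → Prop) :
    bpr p (fun x => A (cnt x)) = ∑ j ∈ Finset.range (n+1), if A j then pb p j else 0 := by
  unfold pb bpr
  beta_reduce
  have step : ∀ j, (if A j then
        (∑ x : Fin n → Bool, @ite ℝ (cnt x = j) (Classical.propDecidable _) (bw p x) 0) else 0)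
      = ∑ x : Fin n → Bool, if A j ∧ cnt x = j then bw p x else 0 := by
    intro j
    split_ifs with h
    · exact Finset.sum_congr rfl (fun x _ => by simp [h])
    · exact (Finset.sum_eq_zero (fun x _ => by simp [h])).symm
  refine Eq.trans ?_ (Finset.sum_congr rfl fun j _ => (step j).symm)
  rw [Finset.sum_comm]
  apply Finset.sum_congr rfl
  intro x _
  rw [Finset.sum_eq_single_of_mem (cnt x)
    (Finset.mem_range.2 (Nat.lt_succ_of_le (cnt_le x)))]
  · simp
  · intro j _ hj
    simp [Ne.symm hj]

/-- the conditional law of `∑ X_i` given `∑ X_i ≥ k` is stochastically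
dominated by the conditional law of `∑ Y_i` given `∑ Y_i ≥ k`, in the sense that
`P(∑X ≥ t | ∑X ≥ k) ≤ P(∑Y ≥ t | ∑Y ≥ k)` for every real `t`. -/
theorem stmt0 {n : ℕ} (p q : Fin n → ℝ)
    (hpq : ∀ i, 0 < p i ∧ p i ≤ q i ∧ q i < 1) (k : ℕ) (hk : k ≤ n) :
    ∀ t : ℝ,
      bpr p (fun x => t ≤ (cnt x : ℝ) ∧ k ≤ cnt x) / bpr p (fun x => k ≤ cnt x)
        ≤ bpr q (fun x => t ≤ (cnt x : ℝ) ∧ k ≤ cnt x) / bpr q (fun x => k ≤ cnt x) := by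
  intro t
  have hp : ∀ i, 0 < p i ∧ p i < 1 := fun i =>
    ⟨(hpq i).1, lt_of_le_of_lt (hpq i).2.1 (hpq i).2.2⟩
  have hq : ∀ i, 0 < q i ∧ q i < 1 := fun i =>
    ⟨lt_of_lt_of_le (hpq i).1 (hpq i).2.1, (hpq i).2.2⟩
  set m : ℕ := max ⌈t⌉₊ k with hm
  have hkm : k ≤ m := le_max_right _ _
  have hiff : ∀ j : ℕ, (t ≤ (j : ℝ) ∧ k ≤ j) ↔ m ≤ j := by
    intro j
    rw [hm, max_le_iff, Nat.ceil_le]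
  -- numerators and denominators as sums over pb
  have e1 : ∀ r : Fin n → ℝ,
      bpr r (fun x => t ≤ (cnt x : ℝ) ∧ k ≤ cnt x)
        = ∑ j ∈ Finset.range (n+1), if m ≤ j then pb r j else 0 := by
    intro r
    rw [bpr_cnt r (fun j => t ≤ (j : ℝ) ∧ k ≤ j)]
    refine Finset.sum_congr rfl (fun j _ => ?_)
    by_cases h : m ≤ j
    · rw [if_pos ((hiff j).2 h), if_pos h]
    · rw [if_neg (fun hc => h ((hiff j).1 hc)), if_neg h]
  have e2 : ∀ r : Fin n → ℝ,
      bpr r (fun x => k ≤ cnt x)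
        = ∑ j ∈ Finset.range (n+1), if k ≤ j then pb r j else 0 := by
    intro r
    rw [bpr_cnt r (fun j => k ≤ j)]
    refine Finset.sum_congr rfl (fun j _ => ?_)
    by_cases h : k ≤ j
    · rw [if_pos h, if_pos h]
    · rw [if_neg h, if_neg h]
  rw [e1 p, e1 q, e2 p, e2 q]
  -- positivity of denominators
  have hden : ∀ (r : Fin n → ℝ), (∀ i, 0 < r i ∧ r i < 1) →
      0 < ∑ j ∈ Finset.range (n+1), if k ≤ j then pb r j else 0 := by
    intro r hr
    apply Finset.sum_pos'
    · intro j _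
      split
      · exact pb_nonneg (fun i => ⟨le_of_lt (hr i).1, le_of_lt (hr i).2⟩) j
      · exact le_refl 0
    · refine ⟨k, Finset.mem_range.2 (by omega), ?_⟩
      rw [if_pos (le_refl k)]
      exact pb_pos hr hk
  rw [div_le_div_iff₀ (hden p hp) (hden q hq)]
  -- split the denominators
  have hsplit : ∀ r : Fin n → ℝ,
      (∑ j ∈ Finset.range (n+1), if k ≤ j then pb r j else 0)
        = (∑ j ∈ Finset.range (n+1), if m ≤ j then pb r j else 0)
          + ∑ j ∈ Finset.range (n+1), if k ≤ j ∧ j < m then pb r j else 0 := by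
    intro r
    rw [← Finset.sum_add_distrib]
    apply Finset.sum_congr rfl
    intro j _
    by_cases h2 : m ≤ j
    · rw [if_pos (show k ≤ j by omega), if_pos h2, if_neg (show ¬(k ≤ j ∧ j < m) by omega),
        add_zero]
    · rw [if_neg h2, zero_add]
      by_cases h1 : k ≤ j
      · rw [if_pos h1, if_pos (show k ≤ j ∧ j < m by omega)]
      · rw [if_neg h1, if_neg (show ¬(k ≤ j ∧ j < m) by omega)]
  rw [hsplit p, hsplit q]
  -- key inequality from the likelihood ratio ordering
  have key : (∑ j ∈ Finset.range (n+1), if m ≤ j then pb p j else 0)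
        * (∑ i ∈ Finset.range (n+1), if k ≤ i ∧ i < m then pb q i else 0)
      ≤ (∑ j ∈ Finset.range (n+1), if m ≤ j then pb q j else 0)
        * (∑ i ∈ Finset.range (n+1), if k ≤ i ∧ i < m then pb p i else 0) := by
    rw [Finset.sum_mul_sum, Finset.sum_mul_sum]
    apply Finset.sum_le_sum
    intro j _
    apply Finset.sum_le_sum
    intro i _
    by_cases h1 : m ≤ j
    · by_cases h2 : k ≤ i ∧ i < m
      · rw [if_pos h1, if_pos h2, if_pos h1, if_pos h2]
        have := pb_lr hpq (show i ≤ j by omega)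
        linarith
      · rw [if_neg h2, if_neg h2, mul_zero, mul_zero]
    · rw [if_neg h1, if_neg h1, zero_mul, zero_mul]
  nlinarith [key]
end
end

section
/- Let X_1,...,X_n be independent Bernoulli random variables with success probabilities p_1,...,p_n ∈ (0,1). For k ∈ {0,...,n-1}, the quotient Q^n_k = P(∑X_i = k+1)/P(∑X_i = k) is strictly increasing in each p_j (for fixed k) and strictly decreasing in k (for fixed p_1,...,p_n). -/
open Finset
open scoped BigOperators Classical

noncomputable section

def Nk {n : ℕ} (p : Fin n → ℝ) (s : Finset (Fin n)) (m : ℕ) : ℝ :=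
  ∑ A ∈ s.powersetCard m, (∏ i ∈ A, p i) * ∏ i ∈ s \ A, (1 - p i)

lemma Nk_congr {n : ℕ} {p q : Fin n → ℝ} {s : Finset (Fin n)}
    (h : ∀ i ∈ s, p i = q i) (m : ℕ) : Nk p s m = Nk q s m := by
  refine Finset.sum_congr rfl fun A hA => ?_
  have hAs : A ⊆ s := (Finset.mem_powersetCard.mp hA).1
  congr 1
  · exact Finset.prod_congr rfl fun i hi => h i (hAs hi)
  · exact Finset.prod_congr rfl fun i hi => by rw [h i (Finset.sdiff_subset hi)]

lemma Nk_empty_zero {n : ℕ} (p : Fin n → ℝ) : Nk p ∅ 0 = 1 := by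
  simp [Nk]

lemma Nk_empty_succ {n : ℕ} (p : Fin n → ℝ) (m : ℕ) : Nk p ∅ (m + 1) = 0 := by
  rw [Nk, Finset.powersetCard_eq_empty.mpr (by simp), Finset.sum_empty]

lemma Nk_zero_of_lt {n : ℕ} (p : Fin n → ℝ) {s : Finset (Fin n)} {m : ℕ}
    (h : s.card < m) : Nk p s m = 0 := by
  rw [Nk, Finset.powersetCard_eq_empty.mpr h, Finset.sum_empty]

lemma Nk_nonneg {n : ℕ} {p : Fin n → ℝ} (hp : ∀ i, 0 < p i ∧ p i < 1)
    (s : Finset (Fin n)) (m : ℕ) : 0 ≤ Nk p s m := by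
  refine Finset.sum_nonneg fun A _ => mul_nonneg ?_ ?_
  · exact Finset.prod_nonneg fun i _ => (hp i).1.le
  · exact Finset.prod_nonneg fun i _ => by linarith [(hp i).2]

lemma Nk_pos {n : ℕ} {p : Fin n → ℝ} (hp : ∀ i, 0 < p i ∧ p i < 1)
    {s : Finset (Fin n)} {m : ℕ} (hm : m ≤ s.card) : 0 < Nk p s m := by
  obtain ⟨A, hAs, hAc⟩ := Finset.exists_subset_card_eq hm
  refine Finset.sum_pos' (fun B _ => mul_nonneg
      (Finset.prod_nonneg fun i _ => (hp i).1.le)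
      (Finset.prod_nonneg fun i _ => by linarith [(hp i).2]))
    ⟨A, Finset.mem_powersetCard.mpr ⟨hAs, hAc⟩, mul_pos
      (Finset.prod_pos fun i _ => (hp i).1)
      (Finset.prod_pos fun i _ => by linarith [(hp i).2])⟩

lemma Nk_insert_zero {n : ℕ} (p : Fin n → ℝ) {j : Fin n} {s : Finset (Fin n)}
    (h : j ∉ s) : Nk p (insert j s) 0 = (1 - p j) * Nk p s 0 := by
  simp [Nk, Finset.prod_insert, h, Finset.mul_sum]

lemma Nk_insert_succ {n : ℕ} (p : Fin n → ℝ) {j : Fin n} {s : Finset (Fin n)}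
    (h : j ∉ s) (m : ℕ) :
    Nk p (insert j s) (m + 1) = p j * Nk p s m + (1 - p j) * Nk p s (m + 1) := by
  rw [Nk, Finset.powersetCard_succ_insert h, Finset.sum_union, Finset.sum_image]
  · rw [add_comm]
    congr 1
    · simp only [Nk, Finset.mul_sum]
      refine Finset.sum_congr rfl fun A hA => ?_
      have hAs : A ⊆ s := (Finset.mem_powersetCard.mp hA).1
      have hjA : j ∉ A := fun hj => h (hAs hj)
      have hd : insert j s \ insert j A = s \ A := by
        ext i
        simp only [Finset.mem_sdiff, Finset.mem_insert]
        constructor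
        · rintro ⟨hi1 | hi1, hi2⟩
          · exact absurd (Or.inl hi1) hi2
          · exact ⟨hi1, fun hA' => hi2 (Or.inr hA')⟩
        · rintro ⟨hi1, hi2⟩
          exact ⟨Or.inr hi1, by rintro (rfl | hA') <;> [exact h hi1; exact hi2 hA']⟩
      rw [hd, Finset.prod_insert hjA]
      ring
    · simp only [Nk, Finset.mul_sum]
      refine Finset.sum_congr rfl fun A hA => ?_
      have hAs : A ⊆ s := (Finset.mem_powersetCard.mp hA).1
      have hjA : j ∉ A := fun hj => h (hAs hj)
      have hd : insert j s \ A = insert j (s \ A) := by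
        rw [Finset.insert_sdiff_of_notMem _ hjA]
      rw [hd, Finset.prod_insert (by simp [h])]
      ring
/-
      have : insert j s \ insert j A = s \ A := by
        ext i
        simp only [Finset.mem_sdiff, Finset.mem_insert]
        constructor
        · rintro ⟨hi1 | hi1, hi2⟩
          · exact absurd (Or.inl hi1) hi2
          · exact ⟨hi1, fun hA' => hi2 (Or.inr hA')⟩
        · rintro ⟨hi1, hi2⟩
          exact ⟨Or.inr hi1, by rintro (rfl | hA') <;> [exact h hi1; exact hi2 hA']⟩
      rw [this, Finset.prod_insert hjA]
      ring
-/
  · intro A hA B hB hAB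
    have hjA : j ∉ A := fun hj => h ((Finset.mem_powersetCard.mp hA).1 hj)
    have hjB : j ∉ B := fun hj => h ((Finset.mem_powersetCard.mp hB).1 hj)
    have := congrArg (Finset.erase · j) hAB
    simpa [Finset.erase_insert, hjA, hjB] using this
  · rw [Finset.disjoint_right]
    intro A hA hA'
    obtain ⟨B, hB, rfl⟩ := Finset.mem_image.mp hA
    exact h ((Finset.mem_powersetCard.mp hA').1 (Finset.mem_insert_self j B))

lemma Nk_lc {n : ℕ} {p : Fin n → ℝ} (hp : ∀ i, 0 < p i ∧ p i < 1)
    (s : Finset (Fin n)) : ∀ k : ℕ,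
    Nk p s k * Nk p s (k + 2) ≤ Nk p s (k + 1) ^ 2 ∧
    (k + 1 ≤ s.card → Nk p s k * Nk p s (k + 2) < Nk p s (k + 1) ^ 2) := by
  induction s using Finset.induction_on with
  | empty =>
    intro k
    constructor
    · cases k with
      | zero => simp [Nk_empty_zero, Nk_empty_succ]
      | succ r => simp [Nk_empty_succ]
    · intro h; simp at h
  | @insert j s hj IH =>
    intro k
    have hq := hp j
    set q := p j with hqdef
    have hqq : 0 < q * (1 - q) := mul_pos hq.1 (by linarith [hq.2])
    cases k with
    | zero =>
      have h0 : Nk p (insert j s) 0 = (1 - q) * Nk p s 0 := Nk_insert_zero p hj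
      have h1 : Nk p (insert j s) 1 = q * Nk p s 0 + (1 - q) * Nk p s 1 :=
        Nk_insert_succ p hj 0
      have h2 : Nk p (insert j s) 2 = q * Nk p s 1 + (1 - q) * Nk p s 2 :=
        Nk_insert_succ p hj 1
      have hM0 : 0 < Nk p s 0 := Nk_pos hp (Nat.zero_le _)
      have hM1 : 0 ≤ Nk p s 1 := Nk_nonneg hp s 1
      have hA : Nk p s 0 * Nk p s 2 ≤ Nk p s 1 ^ 2 := (IH 0).1
      have key : Nk p (insert j s) 0 * Nk p (insert j s) 2 < Nk p (insert j s) 1 ^ 2 := by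
        rw [h0, h1, h2]
        nlinarith [mul_pos (mul_pos hq.1 hq.1) (mul_pos hM0 hM0),
          mul_nonneg hqq.le (mul_nonneg hM0.le hM1),
          mul_le_mul_of_nonneg_left hA (sq_nonneg (1 - q))]
      exact ⟨key.le, fun _ => key⟩
    | succ r =>
      have h1 : Nk p (insert j s) (r + 1) = q * Nk p s r + (1 - q) * Nk p s (r + 1) :=
        Nk_insert_succ p hj r
      have h2 : Nk p (insert j s) (r + 2) = q * Nk p s (r + 1) + (1 - q) * Nk p s (r + 2) :=
        Nk_insert_succ p hj (r + 1)
      have h3 : Nk p (insert j s) (r + 3) = q * Nk p s (r + 2) + (1 - q) * Nk p s (r + 3) :=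
        Nk_insert_succ p hj (r + 2)
      have hMr : 0 ≤ Nk p s r := Nk_nonneg hp s r
      have hMr1 : 0 ≤ Nk p s (r + 1) := Nk_nonneg hp s (r + 1)
      have hMr2 : 0 ≤ Nk p s (r + 2) := Nk_nonneg hp s (r + 2)
      have hMr3 : 0 ≤ Nk p s (r + 3) := Nk_nonneg hp s (r + 3)
      have hA : Nk p s (r + 1) * Nk p s (r + 3) ≤ Nk p s (r + 2) ^ 2 := (IH (r + 1)).1
      have hB : Nk p s r * Nk p s (r + 2) ≤ Nk p s (r + 1) ^ 2 := (IH r).1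
      have hC : Nk p s r * Nk p s (r + 3) ≤ Nk p s (r + 1) * Nk p s (r + 2) := by
        by_cases hcard : r + 3 ≤ s.card
        · have p1 : 0 < Nk p s (r + 1) := Nk_pos hp (by omega)
          have p2 : 0 < Nk p s (r + 2) := Nk_pos hp (by omega)
          nlinarith [mul_le_mul hB hA (mul_nonneg hMr1 hMr3) (sq_nonneg _),
            mul_pos p1 p2]
        · have h0 : Nk p s (r + 3) = 0 := Nk_zero_of_lt p (by omega)
          rw [h0, mul_zero]
          exact mul_nonneg hMr1 hMr2
      constructor
      · rw [h1, h2, h3]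
        nlinarith [mul_le_mul_of_nonneg_left hA (sq_nonneg (1 - q)),
          mul_le_mul_of_nonneg_left hB (sq_nonneg q),
          mul_le_mul_of_nonneg_left hC hqq.le]
      · intro hcard
        rw [Finset.card_insert_of_notMem hj] at hcard
        have hBs : Nk p s r * Nk p s (r + 2) < Nk p s (r + 1) ^ 2 := (IH r).2 (by omega)
        rw [h1, h2, h3]
        nlinarith [mul_le_mul_of_nonneg_left hA (sq_nonneg (1 - q)),
          mul_lt_mul_of_pos_left hBs (mul_pos hq.1 hq.1),
          mul_le_mul_of_nonneg_left hC hqq.le]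

lemma cnt_eq_card {n : ℕ} (x : Fin n → Bool) :
    cnt x = (Finset.univ.filter (fun i => x i = true)).card := by
  rw [cnt, Finset.card_filter]

lemma bw_eq {n : ℕ} (p : Fin n → ℝ) (x : Fin n → Bool) :
    bw p x = (∏ i ∈ Finset.univ.filter (fun i => x i = true), p i) *
      ∏ i ∈ Finset.univ \ Finset.univ.filter (fun i => x i = true), (1 - p i) := by
  rw [bw, Finset.prod_ite, Finset.filter_not]

lemma bpr_filter {n : ℕ} (p : Fin n → ℝ) (m : ℕ) :
    bpr p (fun x => cnt x = m) = ∑ x ∈ Finset.univ.filter (fun x => cnt x = m), bw p x := by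
  rw [bpr, Finset.sum_filter]
  exact Finset.sum_congr rfl fun a _ => by split_ifs <;> rfl

lemma bpr_eq_Nk {n : ℕ} (p : Fin n → ℝ) (m : ℕ) :
    bpr p (fun x => cnt x = m) = Nk p Finset.univ m := by
  rw [bpr_filter, Nk]
  refine Finset.sum_nbij' (fun x => Finset.univ.filter (fun i => x i = true))
    (fun A i => decide (i ∈ A)) ?_ ?_ ?_ ?_ ?_
  · intro x hx
    rw [Finset.mem_filter] at hx
    exact Finset.mem_powersetCard.mpr ⟨Finset.filter_subset _ _, by rw [← cnt_eq_card]; exact hx.2⟩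
  · intro A hA
    rw [Finset.mem_filter]
    refine ⟨Finset.mem_univ _, ?_⟩
    rw [cnt_eq_card]
    have : Finset.univ.filter (fun i => decide (i ∈ A) = true) = A := by
      ext i; simp
    rw [this]
    exact (Finset.mem_powersetCard.mp hA).2
  · intro x hx
    funext i
    by_cases h : x i <;> simp [h]
  · intro A hA
    ext i; simp
  · intro x hx
    rw [bw_eq]

lemma bpr_split_zero {n : ℕ} (p : Fin n → ℝ) (j : Fin n) :
    bpr p (fun x => cnt x = 0) = (1 - p j) * Nk p (Finset.univ.erase j) 0 := by
  rw [bpr_eq_Nk]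
  conv_lhs => rw [← Finset.insert_erase (Finset.mem_univ j)]
  rw [Nk_insert_zero p (Finset.notMem_erase j _)]

lemma bpr_split_succ {n : ℕ} (p : Fin n → ℝ) (j : Fin n) (m : ℕ) :
    bpr p (fun x => cnt x = m + 1) =
      p j * Nk p (Finset.univ.erase j) m + (1 - p j) * Nk p (Finset.univ.erase j) (m + 1) := by
  rw [bpr_eq_Nk]
  conv_lhs => rw [← Finset.insert_erase (Finset.mem_univ j)]
  rw [Nk_insert_succ p (Finset.notMem_erase j _)]

/-- the quotient `Q^n_k = P(∑X = k+1)/P(∑X = k)` is strictly increasing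
in each `p j` (for fixed `k`) and strictly decreasing in `k`. -/
theorem stmt1 {n : ℕ} (p : Fin n → ℝ) (hp : ∀ i, 0 < p i ∧ p i < 1) :
    (∀ (k : ℕ), k ≤ n - 1 →
      ∀ (j : Fin n) (p' : Fin n → ℝ), (∀ i, 0 < p' i ∧ p' i < 1) →
        (∀ i, i ≠ j → p' i = p i) → p j < p' j →
        bpr p (fun x => cnt x = k + 1) / bpr p (fun x => cnt x = k)
          < bpr p' (fun x => cnt x = k + 1) / bpr p' (fun x => cnt x = k)) ∧
    (∀ (k : ℕ), k + 1 ≤ n - 1 →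
      bpr p (fun x => cnt x = k + 2) / bpr p (fun x => cnt x = k + 1)
        < bpr p (fun x => cnt x = k + 1) / bpr p (fun x => cnt x = k)) := by
  constructor
  · intro k hk j p' hp' hpe hlt
    have hcard : (Finset.univ.erase j).card = n - 1 := by
      rw [Finset.card_erase_of_mem (Finset.mem_univ j), Finset.card_univ, Fintype.card_fin]
    have hNe : ∀ m, Nk p' (Finset.univ.erase j) m = Nk p (Finset.univ.erase j) m :=
      fun m => Nk_congr (fun i hi => hpe i (Finset.ne_of_mem_erase hi)) m
    have h1 := hp j
    have h2 := hp' j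
    cases k with
    | zero =>
      rw [bpr_split_zero p j, bpr_split_zero p' j, bpr_split_succ p j 0, bpr_split_succ p' j 0,
        hNe, hNe]
      have hM0 : 0 < Nk p (Finset.univ.erase j) 0 := Nk_pos hp (Nat.zero_le _)
      have hM1 : 0 ≤ Nk p (Finset.univ.erase j) 1 := Nk_nonneg hp _ 1
      rw [div_lt_div_iff₀ (by nlinarith) (by nlinarith)]
      nlinarith [mul_pos (mul_pos hM0 hM0) (sub_pos.mpr hlt)]
    | succ r =>
      have hr1 : r + 1 ≤ (Finset.univ.erase j).card := by rw [hcard]; exact hk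
      have hMr : 0 < Nk p (Finset.univ.erase j) r := Nk_pos hp (by omega)
      have hMr1 : 0 < Nk p (Finset.univ.erase j) (r + 1) := Nk_pos hp hr1
      have hMr2 : 0 ≤ Nk p (Finset.univ.erase j) (r + 2) := Nk_nonneg hp _ _
      have hstrict : Nk p (Finset.univ.erase j) r * Nk p (Finset.univ.erase j) (r + 2)
          < Nk p (Finset.univ.erase j) (r + 1) ^ 2 := (Nk_lc hp _ r).2 hr1
      rw [bpr_split_succ p j r, bpr_split_succ p' j r, bpr_split_succ p j (r + 1),
        bpr_split_succ p' j (r + 1), hNe, hNe, hNe]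
      rw [div_lt_div_iff₀
        (add_pos (mul_pos h1.1 hMr) (mul_pos (by linarith) hMr1))
        (add_pos (mul_pos h2.1 hMr) (mul_pos (by linarith) hMr1))]
      nlinarith [mul_pos (sub_pos.mpr hlt) (sub_pos.mpr hstrict)]
  · intro k hk
    have hn : k + 2 ≤ n := by omega
    have hcard : (Finset.univ : Finset (Fin n)).card = n := by simp
    have hNk : 0 < Nk p Finset.univ k := Nk_pos hp (by omega)
    have hNk1 : 0 < Nk p Finset.univ (k + 1) := Nk_pos hp (by omega)
    have hNk2 : 0 < Nk p Finset.univ (k + 2) := Nk_pos hp (by omega)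
    have hstrict : Nk p Finset.univ k * Nk p Finset.univ (k + 2)
        < Nk p Finset.univ (k + 1) ^ 2 := (Nk_lc hp _ k).2 (by omega)
    rw [bpr_eq_Nk p (k + 2), bpr_eq_Nk p (k + 1), bpr_eq_Nk p k,
      div_lt_div_iff₀ hNk1 hNk]
    nlinarith [hstrict]
end
end

section
/- Let X_1,...,X_n be independent Bernoulli random variables with success probabilities p_1,...,p_n ∈ (0,1). For k ∈ {0,...,n-1}, the quotient P(∑X_i ≥ k+1)/P(∑X_i ≥ k) is strictly increasing in each p_j (for fixed k) and strictly decreasing in k (for fixed p_1,...,p_n). -/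
open Finset
open scoped BigOperators Classical

noncomputable section

def gW {ι : Type*} [Fintype ι] (p : ι → ℝ) (x : ι → Bool) : ℝ :=
  ∏ i, if x i then p i else 1 - p i

def gT {ι : Type*} [Fintype ι] (p : ι → ℝ) (k : ℕ) : ℝ :=
  ∑ x : ι → Bool, if k ≤ ∑ i, (if x i then 1 else 0) then gW p x else 0

lemma gW_nonneg {ι : Type*} [Fintype ι] {p : ι → ℝ} (hp : ∀ i, 0 < p i ∧ p i < 1)
    (x : ι → Bool) : 0 ≤ gW p x := by
  apply Finset.prod_nonneg
  intro i _
  rcases hp i with ⟨h1, h2⟩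
  split <;> linarith

lemma gT_nonneg {ι : Type*} [Fintype ι] {p : ι → ℝ} (hp : ∀ i, 0 < p i ∧ p i < 1)
    (k : ℕ) : 0 ≤ gT p k := by
  apply Finset.sum_nonneg
  intro x _
  split
  · exact gW_nonneg hp x
  · exact le_rfl

lemma gT_mono {ι : Type*} [Fintype ι] {p : ι → ℝ} (hp : ∀ i, 0 < p i ∧ p i < 1)
    (k : ℕ) : gT p (k + 1) ≤ gT p k := by
  apply Finset.sum_le_sum
  intro x _
  by_cases h : k + 1 ≤ ∑ i, (if x i then 1 else 0)
  · rw [if_pos h, if_pos (by omega)]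
  · rw [if_neg h]
    split
    · exact gW_nonneg hp x
    · exact le_rfl

lemma gT_reindex {ι κ : Type*} [Fintype ι] [Fintype κ] (e : ι ≃ κ) (p : κ → ℝ) (k : ℕ) :
    gT (p ∘ e) k = gT p k := by
  unfold gT gW
  apply Fintype.sum_equiv (Equiv.arrowCongr e (Equiv.refl Bool))
  intro x
  have hc : (∑ i, (if x i then 1 else 0) : ℕ)
      = ∑ j, (if (Equiv.arrowCongr e (Equiv.refl Bool)) x j then 1 else 0) := by
    apply Fintype.sum_equiv e
    intro i
    simp [Equiv.arrowCongr]
  have hw : (∏ i, if x i then (p ∘ e) i else 1 - (p ∘ e) i)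
      = ∏ j, if (Equiv.arrowCongr e (Equiv.refl Bool)) x j then p j else 1 - p j := by
    apply Fintype.prod_equiv e
    intro i
    simp [Equiv.arrowCongr]
  rw [← hc, ← hw]

lemma gT_option {κ : Type*} [Fintype κ] (p : Option κ → ℝ) (k : ℕ) :
    gT p k = p none * gT (p ∘ some) (k - 1) + (1 - p none) * gT (p ∘ some) k := by
  have key : gT p k = ∑ y : Bool × (κ → Bool),
      (if k ≤ ∑ i, (if ((Equiv.piOptionEquivProd (β := fun _ : Option κ => Bool)).symm y) i
          then 1 else 0) then
        gW p ((Equiv.piOptionEquivProd (β := fun _ : Option κ => Bool)).symm y) else 0) := by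
    unfold gT
    refine Finset.sum_equiv (Equiv.piOptionEquivProd (β := fun _ : Option κ => Bool))
      (fun x => by simp) (fun x _ => ?_)
    rw [Equiv.symm_apply_apply]
  have hcnt : ∀ (b : Bool) (z : κ → Bool),
      (∑ i, (if ((Equiv.piOptionEquivProd (β := fun _ : Option κ => Bool)).symm (b, z)) i
        then 1 else 0) : ℕ) = (if b then 1 else 0) + ∑ i, (if z i then 1 else 0) := by
    intro b z
    rw [Fintype.sum_option]
    rfl
  have hw : ∀ (b : Bool) (z : κ → Bool),
      gW p ((Equiv.piOptionEquivProd (β := fun _ : Option κ => Bool)).symm (b, z))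
        = (if b then p none else 1 - p none) * gW (p ∘ some) z := by
    intro b z
    unfold gW
    rw [Fintype.prod_option]
    rfl
  rw [key, Fintype.sum_prod_type, Fintype.sum_bool]
  unfold gT
  rw [Finset.mul_sum, Finset.mul_sum]
  congr 1
  · refine Finset.sum_congr rfl (fun z _ => ?_)
    rw [hcnt, hw, mul_ite, mul_zero]
    refine if_congr (by simp; omega) (by simp) rfl
  · refine Finset.sum_congr rfl (fun z _ => ?_)
    rw [hcnt, hw, mul_ite, mul_zero]
    refine if_congr (by simp) (by simp) rfl

lemma masterFin : ∀ (m : ℕ) (p : Fin m → ℝ), (∀ i, 0 < p i ∧ p i < 1) →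
    (gT p 0 = 1) ∧ (∀ k, k ≤ m → 0 < gT p k) ∧ (∀ k, m < k → gT p k = 0) ∧
    (∀ k, k ≤ m → gT p (k - 1) * gT p (k + 1) < gT p k * gT p k) := by
  intro m
  induction m with
  | zero =>
    intro p hp
    have h : ∀ k, gT p k = if k = 0 then 1 else 0 := by
      intro k
      unfold gT
      rw [Finset.sum_eq_single (fun i : Fin 0 => false)]
      · unfold gW
        simp [Nat.le_zero]
      · intro b _ hb
        exact absurd (funext fun i => i.elim0) hb
      · intro hmem
        exact absurd (Finset.mem_univ _) hmem
    refine ⟨by simp [h], fun k hk => ?_, fun k hk => ?_, fun k hk => ?_⟩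
    · interval_cases k
      simp [h]
    · rw [h, if_neg (by omega)]
    · interval_cases k
      simp [h]
  | succ m ih =>
    intro p hp
    have hre : ∀ k, gT p k = gT (p ∘ ⇑(finSuccEquiv m).symm) k := by
      intro k
      rw [← gT_reindex (finSuccEquiv m) (p ∘ ⇑(finSuccEquiv m).symm) k]
      congr 1
      funext x
      simp
    set P : Option (Fin m) → ℝ := p ∘ ⇑(finSuccEquiv m).symm with hP
    set q : Fin m → ℝ := P ∘ some with hq
    have hqp : ∀ i, 0 < q i ∧ q i < 1 := fun i => hp _
    have htp : 0 < P none ∧ P none < 1 := hp _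
    set t := P none with ht
    have hrec : ∀ k, gT p k = t * gT q (k - 1) + (1 - t) * gT q k := by
      intro k
      rw [hre k, gT_option]
    obtain ⟨ihone, ihpos, ihzero, ihLC⟩ := ih q hqp
    have hone : gT p 0 = 1 := by
      rw [hrec 0]
      norm_num [ihone]
    have hpos : ∀ k, k ≤ m + 1 → 0 < gT p k := by
      intro k hk
      rw [hrec k]
      have h1 : 0 < gT q (k - 1) := ihpos (k - 1) (by omega)
      have h2 : 0 ≤ gT q k := gT_nonneg hqp k
      nlinarith [htp.1, htp.2]
    have hzero : ∀ k, m + 1 < k → gT p k = 0 := by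
      intro k hk
      rw [hrec k, ihzero (k - 1) (by omega), ihzero k (by omega)]
      ring
    refine ⟨hone, hpos, hzero, ?_⟩
    intro k hk
    match k with
    | 0 =>
      have h1 : gT p 1 = t * gT q 0 + (1 - t) * gT q 1 := hrec 1
      have hb1 : gT q 1 < 1 := by
        have := ihLC 0 (by omega)
        simp only [Nat.zero_sub, ihone] at this
        linarith
      have hb1' : 0 ≤ gT q 1 := gT_nonneg hqp 1
      rw [Nat.zero_sub, hone, h1, ihone]
      nlinarith [htp.1, htp.2]
    | (j + 1) =>
      have hj : j ≤ m := by omega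
      have hT1 : gT p (j + 1) = t * gT q j + (1 - t) * gT q (j + 1) := by
        have := hrec (j + 1)
        rwa [Nat.add_sub_cancel] at this
      have hT0 : gT p j = t * gT q (j - 1) + (1 - t) * gT q j := hrec j
      have hT2 : gT p (j + 2) = t * gT q (j + 1) + (1 - t) * gT q (j + 2) := by
        have := hrec (j + 2)
        rwa [show j + 2 - 1 = j + 1 by omega] at this
      set u := gT q (j - 1) with hu
      set v := gT q j with hv
      set w := gT q (j + 1) with hw
      set z := gT q (j + 2) with hz
      have hb1 : u * w < v * v := ihLC j hj
      have hb2 : v * z ≤ w * w := by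
        rcases Nat.lt_or_ge j m with hjm | hjm
        · have := ihLC (j + 1) (by omega)
          rw [Nat.add_sub_cancel] at this
          exact this.le
        · have hwz : w = 0 := ihzero (j + 1) (by omega)
          have hzz : z = 0 := ihzero (j + 2) (by omega)
          rw [hwz, hzz]
          simp
      have hu0 : 0 ≤ u := gT_nonneg hqp _
      have hv0 : 0 ≤ v := gT_nonneg hqp _
      have hw0 : 0 ≤ w := gT_nonneg hqp _
      have hz0 : 0 ≤ z := gT_nonneg hqp _
      have hzw : z ≤ w := gT_mono hqp (j + 1)
      have hwv : w ≤ v := gT_mono hqp j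
      have huz : u * z ≤ v * w := by
        rcases eq_or_lt_of_le hw0 with hw' | hw'
        · have hz' : z = 0 := le_antisymm (hzw.trans hw'.symm.le) hz0
          rw [hz']
          rw [mul_zero]
          exact mul_nonneg hv0 hw0
        · have hv' : 0 < v := lt_of_lt_of_le hw' hwv
          have hvw : 0 < v * w := mul_pos hv' hw'
          have key : (u * z) * (v * w) ≤ (v * w) * (v * w) := by
            nlinarith [mul_le_mul hb1.le hb2 (mul_nonneg hv0 hz0) (mul_nonneg hv0 hv0)]
          exact le_of_mul_le_mul_right key hvw
      have goal1 : gT p (j + 1 - 1) = gT p j := by rw [Nat.add_sub_cancel]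
      have goal2 : gT p (j + 1 + 1) = gT p (j + 2) := by rw [show j + 1 + 1 = j + 2 by omega]
      rw [goal1, goal2, hT0, hT1, hT2]
      have h1t : 0 ≤ 1 - t := by linarith [htp.2]
      have h1 : 0 < t * t * (v * v - u * w) :=
        mul_pos (mul_pos htp.1 htp.1) (sub_pos.2 hb1)
      have h2 : 0 ≤ (1 - t) * (1 - t) * (w * w - v * z) :=
        mul_nonneg (mul_nonneg h1t h1t) (sub_nonneg.2 hb2)
      have h3 : 0 ≤ t * (1 - t) * (v * w - u * z) :=
        mul_nonneg (mul_nonneg htp.1.le h1t) (sub_nonneg.2 huz)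
      have expand : (t * v + (1 - t) * w) * (t * v + (1 - t) * w)
          - (t * u + (1 - t) * v) * (t * w + (1 - t) * z)
          = t * t * (v * v - u * w) + (1 - t) * (1 - t) * (w * w - v * z)
            + t * (1 - t) * (v * w - u * z) := by ring
      linarith [h1, h2, h3, expand]

lemma master {ι : Type*} [Fintype ι] (p : ι → ℝ) (hp : ∀ i, 0 < p i ∧ p i < 1) :
    (gT p 0 = 1) ∧ (∀ k, k ≤ Fintype.card ι → 0 < gT p k) ∧
    (∀ k, Fintype.card ι < k → gT p k = 0) ∧
    (∀ k, k ≤ Fintype.card ι → gT p (k - 1) * gT p (k + 1) < gT p k * gT p k) := by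
  have hre : ∀ k, gT p k = gT (p ∘ ⇑(Fintype.equivFin ι).symm) k := by
    intro k
    rw [← gT_reindex (Fintype.equivFin ι) (p ∘ ⇑(Fintype.equivFin ι).symm) k]
    congr 1
    funext x
    simp
  obtain ⟨h1, h2, h3, h4⟩ := masterFin (Fintype.card ι) (p ∘ ⇑(Fintype.equivFin ι).symm)
    (fun i => hp _)
  exact ⟨by rw [hre]; exact h1, fun k hk => by rw [hre]; exact h2 k hk,
    fun k hk => by rw [hre]; exact h3 k hk,
    fun k hk => by rw [hre, hre, hre] ; exact h4 k hk⟩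

lemma bpr_eq_gT {n : ℕ} (p : Fin n → ℝ) (k : ℕ) :
    bpr p (fun x => k ≤ cnt x) = gT p k := by
  unfold bpr gT bw gW cnt
  refine Finset.sum_congr ?_ (fun x _ => ?_)
  · congr 1
    exact Subsingleton.elim _ _
  · by_cases h : k ≤ ∑ i, (if x i then 1 else 0 : ℕ)
    · rw [if_pos h, if_pos h]
    · rw [if_neg h, if_neg h]

lemma split_at {n : ℕ} (j : Fin n) (P : Fin n → ℝ) (k : ℕ) :
    gT P k = P j * gT (fun i : {i : Fin n // i ≠ j} => P i.1) (k - 1)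
      + (1 - P j) * gT (fun i : {i : Fin n // i ≠ j} => P i.1) k := by
  rw [← gT_reindex (Equiv.optionSubtypeNe j) P k, gT_option]
  have hfun : (P ∘ ⇑(Equiv.optionSubtypeNe j)) ∘ some
      = fun i : {i : Fin n // i ≠ j} => P i.1 := by
    funext i
    simp
  rw [hfun]
  simp

/-- the quotient `P(∑X ≥ k+1)/P(∑X ≥ k)` is strictly increasing
in each `p j` (for fixed `k`) and strictly decreasing in `k`. -/
theorem stmt2 {n : ℕ} (p : Fin n → ℝ) (hp : ∀ i, 0 < p i ∧ p i < 1) :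
    (∀ (k : ℕ), k ≤ n - 1 →
      ∀ (j : Fin n) (p' : Fin n → ℝ), (∀ i, 0 < p' i ∧ p' i < 1) →
        (∀ i, i ≠ j → p' i = p i) → p j < p' j →
        bpr p (fun x => k + 1 ≤ cnt x) / bpr p (fun x => k ≤ cnt x)
          < bpr p' (fun x => k + 1 ≤ cnt x) / bpr p' (fun x => k ≤ cnt x)) ∧
    (∀ (k : ℕ), k + 1 ≤ n - 1 →
      bpr p (fun x => k + 2 ≤ cnt x) / bpr p (fun x => k + 1 ≤ cnt x)
        < bpr p (fun x => k + 1 ≤ cnt x) / bpr p (fun x => k ≤ cnt x)) := by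
  constructor
  · intro k hk j p' hp' hne hlt
    have hn : 0 < n := j.pos
    have hcard : Fintype.card {i : Fin n // i ≠ j} = n - 1 := by
      have h := Fintype.card_congr (Equiv.optionSubtypeNe j)
      simp only [Fintype.card_option, Fintype.card_fin] at h
      omega
    set q : {i : Fin n // i ≠ j} → ℝ := fun i => p i.1 with hqdef
    have hqq : (fun i : {i : Fin n // i ≠ j} => p' i.1) = q := by
      funext i
      exact hne i.1 i.2
    have hq : ∀ i, 0 < q i ∧ q i < 1 := fun i => hp _
    obtain ⟨hone, hpos, hzero, hLC⟩ := master q hq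
    rw [hcard] at hpos hzero hLC
    set b := gT q with hb
    have hD : bpr p (fun x => k ≤ cnt x) = p j * b (k - 1) + (1 - p j) * b k := by
      rw [bpr_eq_gT, split_at j p k]
    have hN : bpr p (fun x => k + 1 ≤ cnt x) = p j * b k + (1 - p j) * b (k + 1) := by
      rw [bpr_eq_gT, split_at j p (k + 1), Nat.add_sub_cancel]
    have hD' : bpr p' (fun x => k ≤ cnt x) = p' j * b (k - 1) + (1 - p' j) * b k := by
      rw [bpr_eq_gT, split_at j p' k, hqq]
    have hN' : bpr p' (fun x => k + 1 ≤ cnt x) = p' j * b k + (1 - p' j) * b (k + 1) := by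
      rw [bpr_eq_gT, split_at j p' (k + 1), Nat.add_sub_cancel, hqq]
    have hb0 : 0 < b (k - 1) := hpos (k - 1) (by omega)
    have hbk : 0 < b k := hpos k hk
    have hbk1 : 0 ≤ b (k + 1) := gT_nonneg hq _
    have hlc : b (k - 1) * b (k + 1) < b k * b k := hLC k hk
    have hDpos : 0 < bpr p (fun x => k ≤ cnt x) := by
      rw [hD]
      nlinarith [(hp j).1, (hp j).2]
    have hD'pos : 0 < bpr p' (fun x => k ≤ cnt x) := by
      rw [hD']
      nlinarith [(hp' j).1, (hp' j).2]
    rw [div_lt_div_iff₀ hDpos hD'pos, hN, hN', hD, hD']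
    have hprod : 0 < (p' j - p j) * (b k * b k - b (k - 1) * b (k + 1)) :=
      mul_pos (sub_pos.2 hlt) (sub_pos.2 hlc)
    nlinarith [hprod]
  · intro k hk
    obtain ⟨hone, hpos, hzero, hLC⟩ := master p hp
    rw [Fintype.card_fin] at hpos hzero hLC
    have h1 : 0 < gT p k := hpos k (by omega)
    have h2 : 0 < gT p (k + 1) := hpos (k + 1) (by omega)
    have hlc := hLC (k + 1) (by omega)
    rw [Nat.add_sub_cancel, show k + 1 + 1 = k + 2 by omega] at hlc
    rw [bpr_eq_gT, bpr_eq_gT, bpr_eq_gT, div_lt_div_iff₀ h2 h1]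
    nlinarith [hlc]
end
end

section
/- Let X = (X_1,...,X_n) and Y = (Y_1,...,Y_n) be vectors of independent Bernoulli random variables with success probabilities p_i and q_i respectively, 0 < p_i ≤ q_i < 1, and set β_i = (p_i/(1-p_i))·((1-q_i)/q_i). Then the following are equivalent: (i) all β_i are equal; (ii) for every k ∈ {0,...,n}, the conditional law of X given ∑X_i = k equals the conditional law of Y given ∑Y_i = k; (iii) the conditional law of X given ∑X_i = k equals the conditional law of Y given ∑Y_i = k for some k ∈ {1,...,n-1}. -/
open Finset
open scoped BigOperators Classical

noncomputable section

lemma bw_pos {n : ℕ} {p : Fin n → ℝ} (hp : ∀ i, 0 < p i ∧ p i < 1) (x : Fin n → Bool) :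
    0 < bw p x := by
  refine Finset.prod_pos fun i _ => ?_
  by_cases h : x i <;> simp [h]
  · exact (hp i).1
  · linarith [(hp i).2]

lemma cnt_indicator {n : ℕ} (S : Finset (Fin n)) :
    cnt (fun i => decide (i ∈ S)) = S.card := by
  simp [cnt, Finset.sum_ite_mem]

lemma bpr_pos {n : ℕ} {p : Fin n → ℝ} (hp : ∀ i, 0 < p i ∧ p i < 1) {k : ℕ} (hk : k ≤ n) :
    0 < bpr p (fun y => cnt y = k) := by
  obtain ⟨S, -, hS⟩ := Finset.exists_subset_card_eq (by simpa using hk : k ≤ (univ : Finset (Fin n)).card)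
  refine Finset.sum_pos' (fun x _ => ?_) ⟨fun i => decide (i ∈ S), Finset.mem_univ _, ?_⟩
  · split
    · exact (bw_pos hp x).le
    · exact le_refl _
  · have : cnt (fun i => decide (i ∈ S)) = k := by rw [cnt_indicator, hS]
    simp only [this, if_true]
    exact bw_pos hp _

lemma bw_scale {n : ℕ} {p q : Fin n → ℝ} (hpq : ∀ i, 0 < p i ∧ p i ≤ q i ∧ q i < 1)
    {c : ℝ} (hc : ∀ i, p i / (1 - p i) * ((1 - q i) / q i) = c) (x : Fin n → Bool) :
    bw p x = (∏ i, (1 - p i) / (1 - q i)) * c ^ (cnt x) * bw q x := by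
  unfold bw cnt
  rw [← Finset.prod_pow_eq_pow_sum, ← Finset.prod_mul_distrib, ← Finset.prod_mul_distrib]
  refine Finset.prod_congr rfl fun i _ => ?_
  obtain ⟨h1, h2, h3⟩ := hpq i
  have hq0 : 0 < q i := lt_of_lt_of_le h1 h2
  have hp1 : p i < 1 := lt_of_le_of_lt h2 h3
  have e1 : (1:ℝ) - p i ≠ 0 := by linarith
  have e2 : (1:ℝ) - q i ≠ 0 := by linarith
  have hci := hc i
  by_cases h : x i <;> simp [h]
  · field_simp at hci ⊢
    linear_combination hci
  · field_simp

lemma cond_of_beta {n : ℕ} {p q : Fin n → ℝ} (hpq : ∀ i, 0 < p i ∧ p i ≤ q i ∧ q i < 1)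
    {c : ℝ} (hcpos : 0 < c)
    (hc : ∀ i, p i / (1 - p i) * ((1 - q i) / q i) = c) {k : ℕ} (hk : k ≤ n)
    (x : Fin n → Bool) :
    condPMF p (fun y => cnt y = k) x = condPMF q (fun y => cnt y = k) x := by
  have hp : ∀ i, 0 < p i ∧ p i < 1 := fun i =>
    ⟨(hpq i).1, lt_of_le_of_lt (hpq i).2.1 (hpq i).2.2⟩
  have hq : ∀ i, 0 < q i ∧ q i < 1 := fun i =>
    ⟨lt_of_lt_of_le (hpq i).1 (hpq i).2.1, (hpq i).2.2⟩
  set C : ℝ := (∏ i, (1 - p i) / (1 - q i)) * c ^ k with hC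
  have hCpos : 0 < C := by
    apply mul_pos
    · refine Finset.prod_pos fun i _ => div_pos (by linarith [(hp i).2]) (by linarith [(hq i).2])
    · exact pow_pos hcpos k
  have hden : bpr p (fun y => cnt y = k) = C * bpr q (fun y => cnt y = k) := by
    unfold bpr
    rw [Finset.mul_sum]
    refine Finset.sum_congr rfl fun y _ => ?_
    by_cases h : cnt y = k
    · rw [if_pos h, if_pos h, bw_scale hpq hc y, h, hC]
    · rw [if_neg h, if_neg h, mul_zero]
  unfold condPMF
  by_cases h : cnt x = k
  · rw [if_pos h, if_pos h, hden, bw_scale hpq hc x, h, hC,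
      mul_div_mul_left _ _ (ne_of_gt hCpos)]
  · rw [if_neg h, if_neg h, zero_div, zero_div]

lemma beta_of_cond {n : ℕ} {p q : Fin n → ℝ} (hpq : ∀ i, 0 < p i ∧ p i ≤ q i ∧ q i < 1)
    {k : ℕ} (hk1 : 1 ≤ k) (hk2 : k + 1 ≤ n)
    (h : ∀ x : Fin n → Bool,
      condPMF p (fun y => cnt y = k) x = condPMF q (fun y => cnt y = k) x)
    (i j : Fin n) :
    p i / (1 - p i) * ((1 - q i) / q i) = p j / (1 - p j) * ((1 - q j) / q j) := by
  have hp : ∀ l, 0 < p l ∧ p l < 1 := fun l =>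
    ⟨(hpq l).1, lt_of_le_of_lt (hpq l).2.1 (hpq l).2.2⟩
  have hq : ∀ l, 0 < q l ∧ q l < 1 := fun l =>
    ⟨lt_of_lt_of_le (hpq l).1 (hpq l).2.1, (hpq l).2.2⟩
  by_cases hij : i = j
  · rw [hij]
  -- construct a set S with i ∈ S, j ∉ S, |S| = k
  have hijmem : ({i} : Finset (Fin n)) ⊆ univ.erase j := by
    simp [Finset.subset_iff, hij]
  obtain ⟨S, hiS, hSj, hScard⟩ := Finset.exists_subsuperset_card_eq (n := k) hijmem
    (by simpa using hk1)
    (by rw [Finset.card_erase_of_mem (Finset.mem_univ j), Finset.card_univ, Fintype.card_fin]; omega)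
  have hiS' : i ∈ S := hiS (Finset.mem_singleton_self i)
  have hjS : j ∉ S := fun hmem => by simpa using (hSj hmem)
  set S' : Finset (Fin n) := insert j (S.erase i) with hS'
  have hjS' : j ∈ S' := Finset.mem_insert_self _ _
  have hiS'' : i ∉ S' := by
    simp [hS', hij, Finset.mem_erase]
  have hS'card : S'.card = k := by
    rw [hS', Finset.card_insert_of_notMem (fun hmem => hjS (Finset.mem_of_mem_erase hmem)),
      Finset.card_erase_of_mem hiS', hScard]
    omega
  set x : Fin n → Bool := fun l => decide (l ∈ S) with hx
  set y : Fin n → Bool := fun l => decide (l ∈ S') with hy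
  have hcx : cnt x = k := by rw [hx, cnt_indicator, hScard]
  have hcy : cnt y = k := by rw [hy, cnt_indicator, hS'card]
  have hPpos := bpr_pos hp (k := k) (by omega)
  have hQpos := bpr_pos hq (k := k) (by omega)
  set P := bpr p (fun y => cnt y = k) with hP
  set Q := bpr q (fun y => cnt y = k) with hQ
  -- from condPMF equalities
  have ex : bw p x * Q = bw q x * P := by
    have := h x
    unfold condPMF at this
    rw [if_pos hcx, if_pos hcx, ← hP, ← hQ, div_eq_div_iff (ne_of_gt hPpos) (ne_of_gt hQpos)] at this
    exact this
  have ey : bw p y * Q = bw q y * P := by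
    have := h y
    unfold condPMF at this
    rw [if_pos hcy, if_pos hcy, ← hP, ← hQ, div_eq_div_iff (ne_of_gt hPpos) (ne_of_gt hQpos)] at this
    exact this
  have main : bw p x * bw q y = bw q x * bw p y := by
    have h1 : (bw p x * bw q y) * (Q * P) = (bw q x * bw p y) * (Q * P) := by
      linear_combination (bw q y * P) * ex - (bw q x * P) * ey
    exact mul_right_cancel₀ (by positivity) h1
  -- factor the products
  set e : Finset (Fin n) := (univ.erase i).erase j with he
  have hie : i ∉ e := by simp [he]
  have hje : j ∉ e := by simp [he, Ne.symm hij]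
  have hfac : ∀ (r : Fin n → ℝ) (z : Fin n → Bool),
      bw r z = (if z i then r i else 1 - r i) * ((if z j then r j else 1 - r j) *
        ∏ l ∈ e, (if z l then r l else 1 - r l)) := by
    intro r z
    rw [bw, ← Finset.mul_prod_erase univ _ (Finset.mem_univ i),
      ← Finset.mul_prod_erase (univ.erase i) _ (Finset.mem_erase.2 ⟨Ne.symm hij, Finset.mem_univ j⟩)]
  have hxi : x i = true := by simp [hx, hiS']
  have hxj : x j = false := by simp [hx, hjS]
  have hyi : y i = false := by simp [hy, hiS'']
  have hyj : y j = true := by simp [hy, hjS']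
  have hee : ∀ l ∈ e, x l = y l := by
    intro l hl
    rw [he] at hl
    simp only [Finset.mem_erase] at hl
    rw [hx, hy, hS']
    simp [Finset.mem_insert, Finset.mem_erase, hl.1, hl.2.1]
  have hRp : ∀ l ∈ e, (if y l then p l else 1 - p l) = (if x l then p l else 1 - p l) := by
    intro l hl; rw [hee l hl]
  have hRq : ∀ l ∈ e, (if y l then q l else 1 - q l) = (if x l then q l else 1 - q l) := by
    intro l hl; rw [hee l hl]
  set Rp := ∏ l ∈ e, (if x l then p l else 1 - p l) with hRpdef
  set Rq := ∏ l ∈ e, (if x l then q l else 1 - q l) with hRqdef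
  have hRppos : 0 < Rp := Finset.prod_pos fun l _ => by
    by_cases hb : x l <;> simp [hb]
    exacts [(hp l).1, by linarith [(hp l).2]]
  have hRqpos : 0 < Rq := Finset.prod_pos fun l _ => by
    by_cases hb : x l <;> simp [hb]
    exacts [(hq l).1, by linarith [(hq l).2]]
  have ebwpx : bw p x = p i * ((1 - p j) * Rp) := by
    rw [hfac p x, hxi, hxj]; simp [Rp]
  have ebwqx : bw q x = q i * ((1 - q j) * Rq) := by
    rw [hfac q x, hxi, hxj]; simp [Rq]
  have ebwpy : bw p y = (1 - p i) * (p j * Rp) := by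
    rw [hfac p y, hyi, hyj, if_neg (by simp), if_pos rfl, Finset.prod_congr rfl hRp]
  have ebwqy : bw q y = (1 - q i) * (q j * Rq) := by
    rw [hfac q y, hyi, hyj, if_neg (by simp), if_pos rfl, Finset.prod_congr rfl hRq]
  rw [ebwpx, ebwqx, ebwpy, ebwqy] at main
  have key : p i * (1 - p j) * ((1 - q i) * q j) = q i * (1 - q j) * ((1 - p i) * p j) := by
    have h2 : (p i * (1 - p j) * ((1 - q i) * q j)) * (Rp * Rq)
        = (q i * (1 - q j) * ((1 - p i) * p j)) * (Rp * Rq) := by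
      linear_combination main
    exact mul_right_cancel₀ (by positivity) h2
  have e1 : (1:ℝ) - p i ≠ 0 := by linarith [(hp i).2]
  have e2 : (1:ℝ) - p j ≠ 0 := by linarith [(hp j).2]
  have e3 : q i ≠ 0 := ne_of_gt (hq i).1
  have e4 : q j ≠ 0 := ne_of_gt (hq j).1
  field_simp
  linear_combination key


/-- with `β i = (p i/(1-p i))·((1-q i)/q i)`, the following are
equivalent: (i) all `β i` are equal; (ii) for every `k ≤ n` the conditional laws of
`X` and `Y` given exactly `k` successes coincide; (iii) they coincide for some
`k ∈ {1,…,n-1}`. -/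
theorem stmt3 {n : ℕ} (hn : 2 ≤ n) (p q : Fin n → ℝ)
    (hpq : ∀ i, 0 < p i ∧ p i ≤ q i ∧ q i < 1) :
    ((∀ i j : Fin n,
        p i / (1 - p i) * ((1 - q i) / q i) = p j / (1 - p j) * ((1 - q j) / q j)) ↔
      (∀ k : ℕ, k ≤ n → ∀ x : Fin n → Bool,
        condPMF p (fun y => cnt y = k) x = condPMF q (fun y => cnt y = k) x)) ∧
    ((∀ i j : Fin n,
        p i / (1 - p i) * ((1 - q i) / q i) = p j / (1 - p j) * ((1 - q j) / q j)) ↔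
      (∃ k : ℕ, 1 ≤ k ∧ k ≤ n - 1 ∧ ∀ x : Fin n → Bool,
        condPMF p (fun y => cnt y = k) x = condPMF q (fun y => cnt y = k) x)) := by
  have i0 : Fin n := ⟨0, by omega⟩
  have dir1 : (∀ i j : Fin n,
      p i / (1 - p i) * ((1 - q i) / q i) = p j / (1 - p j) * ((1 - q j) / q j)) →
      ∀ k : ℕ, k ≤ n → ∀ x : Fin n → Bool,
        condPMF p (fun y => cnt y = k) x = condPMF q (fun y => cnt y = k) x := by
    intro h k hk x
    set c := p i0 / (1 - p i0) * ((1 - q i0) / q i0) with hcdef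
    have hcpos : 0 < c := by
      obtain ⟨h1, h2, h3⟩ := hpq i0
      have : 0 < q i0 := lt_of_lt_of_le h1 h2
      have : p i0 < 1 := lt_of_le_of_lt h2 h3
      apply mul_pos <;> apply div_pos <;> linarith [(hpq i0).1, (hpq i0).2.2]
    exact cond_of_beta hpq hcpos (fun i => h i i0) hk x
  constructor
  · constructor
    · exact dir1
    · intro h
      exact beta_of_cond hpq (k := 1) le_rfl (by omega) (h 1 (by omega))
  · constructor
    · intro h
      exact ⟨1, le_rfl, by omega, dir1 h 1 (by omega)⟩
    · rintro ⟨k, hk1, hk2, h⟩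
      exact beta_of_cond hpq hk1 (by omega) h
end
end

section
/- Let X and Y be vectors of independent Bernoulli random variables with parameters p_i and q_i respectively, 0 < p_i ≤ q_i < 1 for all i ∈ {1,...,n}. If p_i = q_i for some i but not for all i, then for every k ∈ {1,...,n-1}, the conditional law of X given ∑X_i ≥ k is NOT stochastically dominated by the conditional law of Y given ∑Y_i ≥ k. In fact, for any index i with p_i = q_i but p_j < q_j for some j ≠ i, one has P(X_i = 1 | ∑X ≥ k) > P(Y_i = 1 | ∑Y ≥ k). -/
open Finset
open scoped BigOperators Classical

noncomputable section

namespace Stmt7Aux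
variable {n : ℕ}

def Wt (v : Fin n → ℝ) (s t : Finset (Fin n)) : ℝ :=
  (∏ l ∈ t, v l) * ∏ l ∈ s \ t, (1 - v l)

def elz (v : Fin n → ℝ) (s : Finset (Fin n)) (m : ℤ) : ℝ :=
  ∑ t ∈ s.powerset, if (t.card : ℤ) = m then Wt v s t else 0

def Sz (v : Fin n → ℝ) (s : Finset (Fin n)) (m : ℤ) : ℝ :=
  ∑ t ∈ s.powerset, if m ≤ (t.card : ℤ) then Wt v s t else 0

def SNz (v : Fin n → ℝ) (i : Fin n) (s : Finset (Fin n)) (m : ℤ) : ℝ :=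
  ∑ t ∈ s.powerset, if i ∈ t ∧ m ≤ (t.card : ℤ) then Wt v s t else 0

lemma split (v : Fin n → ℝ) {a : Fin n} {s : Finset (Fin n)} (ha : a ∉ s)
    (cond : Finset (Fin n) → Prop) [DecidablePred cond] :
    (∑ t ∈ (insert a s).powerset, if cond t then Wt v (insert a s) t else 0)
      = (1 - v a) * (∑ t ∈ s.powerset, if cond t then Wt v s t else 0)
        + v a * (∑ t ∈ s.powerset, if cond (insert a t) then Wt v s t else 0) := by
  have hdisj : Disjoint s.powerset (s.powerset.image (insert a)) := by
    rw [Finset.disjoint_left]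
    rintro t ht ht'
    rcases Finset.mem_image.1 ht' with ⟨u, hu, rfl⟩
    exact ha (Finset.mem_powerset.1 ht (Finset.mem_insert_self a u))
  rw [Finset.powerset_insert, Finset.sum_union hdisj]
  congr 1
  · rw [Finset.mul_sum]
    refine Finset.sum_congr rfl fun t ht => ?_
    have hat : a ∉ t := fun h => ha (Finset.mem_powerset.1 ht h)
    have h1 : insert a s \ t = insert a (s \ t) := by
      ext l
      simp only [Finset.mem_sdiff, Finset.mem_insert]
      constructor
      · rintro ⟨h | h, h2⟩
        · exact Or.inl h
        · exact Or.inr ⟨h, h2⟩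
      · rintro (rfl | ⟨h, h2⟩)
        · exact ⟨Or.inl rfl, hat⟩
        · exact ⟨Or.inr h, h2⟩
    have h2 : a ∉ s \ t := fun h => ha (Finset.mem_sdiff.1 h).1
    have : Wt v (insert a s) t = (1 - v a) * Wt v s t := by
      rw [Wt, Wt, h1, Finset.prod_insert h2]; ring
    rw [this, mul_ite, mul_zero]
  · have hinj : Set.InjOn (insert a) (s.powerset : Set (Finset (Fin n))) := by
      intro t1 h1 t2 h2 he
      have e1 : a ∉ t1 := fun h => ha (Finset.mem_powerset.1 (by simpa using h1) h)
      have e2 : a ∉ t2 := fun h => ha (Finset.mem_powerset.1 (by simpa using h2) h)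
      rw [← Finset.erase_insert e1, ← Finset.erase_insert e2, he]
    rw [Finset.sum_image hinj, Finset.mul_sum]
    refine Finset.sum_congr rfl fun t ht => ?_
    have hat : a ∉ t := fun h => ha (Finset.mem_powerset.1 ht h)
    have h1 : insert a s \ insert a t = s \ t := by
      ext l
      simp only [Finset.mem_sdiff, Finset.mem_insert, not_or]
      constructor
      · rintro ⟨h | h, h2, h3⟩
        · exact absurd h h2
        · exact ⟨h, h3⟩
      · rintro ⟨h, h2⟩
        exact ⟨Or.inr h, fun e => ha (e ▸ h), h2⟩
    have : Wt v (insert a s) (insert a t) = v a * Wt v s t := by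
      rw [Wt, Wt, h1, Finset.prod_insert hat]; ring
    rw [this, mul_ite, mul_zero]


lemma elz_rec (v : Fin n → ℝ) {a : Fin n} {s : Finset (Fin n)} (ha : a ∉ s) (m : ℤ) :
    elz v (insert a s) m = (1 - v a) * elz v s m + v a * elz v s (m - 1) := by
  rw [elz, split v ha]
  congr 2
  refine Finset.sum_congr rfl fun t ht => ?_
  have hat : a ∉ t := fun h => ha (Finset.mem_powerset.1 ht h)
  rw [Finset.card_insert_of_notMem hat]
  congr 1
  simp only [eq_iff_iff]
  push_cast
  omega

lemma Sz_rec (v : Fin n → ℝ) {a : Fin n} {s : Finset (Fin n)} (ha : a ∉ s) (m : ℤ) :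
    Sz v (insert a s) m = (1 - v a) * Sz v s m + v a * Sz v s (m - 1) := by
  rw [Sz, split v ha]
  congr 2
  refine Finset.sum_congr rfl fun t ht => ?_
  have hat : a ∉ t := fun h => ha (Finset.mem_powerset.1 ht h)
  rw [Finset.card_insert_of_notMem hat]
  congr 1
  simp only [eq_iff_iff]
  push_cast
  omega

lemma SNz_rec (v : Fin n → ℝ) {i a : Fin n} {s : Finset (Fin n)} (ha : a ∉ s)
    (hia : a ≠ i) (m : ℤ) :
    SNz v i (insert a s) m = (1 - v a) * SNz v i s m + v a * SNz v i s (m - 1) := by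
  rw [SNz, split v ha]
  congr 2
  refine Finset.sum_congr rfl fun t ht => ?_
  have hat : a ∉ t := fun h => ha (Finset.mem_powerset.1 ht h)
  rw [Finset.card_insert_of_notMem hat]
  congr 1
  simp only [eq_iff_iff, Finset.mem_insert]
  constructor
  · rintro ⟨h1, h2⟩
    refine ⟨?_, by push_cast at h2 ⊢; omega⟩
    rcases h1 with h | h
    · exact absurd h.symm hia
    · exact h
  · rintro ⟨h1, h2⟩
    exact ⟨Or.inr h1, by push_cast at h2 ⊢; omega⟩

lemma SNz_rec_i (v : Fin n → ℝ) {i : Fin n} {s : Finset (Fin n)} (hi : i ∉ s) (m : ℤ) :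
    SNz v i (insert i s) m = v i * Sz v s (m - 1) := by
  rw [SNz, split v hi]
  have h1 : (∑ t ∈ s.powerset, if i ∈ t ∧ m ≤ (t.card : ℤ) then Wt v s t else 0) = 0 := by
    refine Finset.sum_eq_zero fun t ht => ?_
    have : i ∉ t := fun h => hi (Finset.mem_powerset.1 ht h)
    rw [if_neg (fun hc => this hc.1)]
  rw [h1, mul_zero, zero_add, Sz]
  congr 1
  refine Finset.sum_congr rfl fun t ht => ?_
  have hit : i ∉ t := fun h => hi (Finset.mem_powerset.1 ht h)
  rw [Finset.card_insert_of_notMem hit]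
  congr 1
  simp only [eq_iff_iff, Finset.mem_insert]
  constructor
  · rintro ⟨_, h2⟩; push_cast at h2 ⊢; omega
  · intro h; exact ⟨Or.inl trivial, by push_cast at h ⊢; omega⟩

lemma Wt_nonneg {v : Fin n → ℝ} (hv : ∀ l, 0 ≤ v l ∧ v l ≤ 1) (s t : Finset (Fin n)) :
    0 ≤ Wt v s t :=
  mul_nonneg (Finset.prod_nonneg fun l _ => (hv l).1)
    (Finset.prod_nonneg fun l _ => by linarith [(hv l).2])

lemma elz_nonneg {v : Fin n → ℝ} (hv : ∀ l, 0 ≤ v l ∧ v l ≤ 1) (s : Finset (Fin n)) (m : ℤ) :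
    0 ≤ elz v s m := by
  refine Finset.sum_nonneg fun t ht => ?_
  split_ifs
  · exact Wt_nonneg hv s t
  · exact le_refl 0

lemma Sz_nonneg {v : Fin n → ℝ} (hv : ∀ l, 0 ≤ v l ∧ v l ≤ 1) (s : Finset (Fin n)) (m : ℤ) :
    0 ≤ Sz v s m := by
  refine Finset.sum_nonneg fun t ht => ?_
  split_ifs
  · exact Wt_nonneg hv s t
  · exact le_refl 0

lemma elz_empty (v : Fin n → ℝ) (m : ℤ) :
    elz v ∅ m = if (0 : ℤ) = m then 1 else 0 := by
  rw [elz, Finset.powerset_empty, Finset.sum_singleton]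
  simp [Wt]

lemma elz_zero_of_gt {v : Fin n → ℝ} {s : Finset (Fin n)} {m : ℤ} (hm : (s.card : ℤ) < m) :
    elz v s m = 0 := by
  refine Finset.sum_eq_zero fun t ht => ?_
  rw [if_neg]
  intro hc
  have := Finset.card_le_card (Finset.mem_powerset.1 ht)
  omega

lemma elz_pos {v : Fin n → ℝ} (hv : ∀ l, 0 < v l ∧ v l < 1) (s : Finset (Fin n)) :
    ∀ m : ℤ, 0 ≤ m → m ≤ s.card → 0 < elz v s m := by
  induction s using Finset.induction_on with
  | empty =>
    intro m h1 h2
    simp only [Finset.card_empty, Nat.cast_zero] at h2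
    have : m = 0 := le_antisymm h2 h1
    rw [elz_empty, if_pos this.symm]; norm_num
  | @insert a s ha ih =>
    intro m h1 h2
    have hv' : ∀ l, 0 ≤ v l ∧ v l ≤ 1 := fun l => ⟨(hv l).1.le, (hv l).2.le⟩
    rw [elz_rec v ha]
    rw [Finset.card_insert_of_notMem ha] at h2
    push_cast at h2
    rcases le_or_gt m (s.card : ℤ) with h | h
    · have t1 : 0 < (1 - v a) * elz v s m :=
        mul_pos (by linarith [(hv a).2]) (ih m h1 h)
      have t2 : 0 ≤ v a * elz v s (m - 1) :=
        mul_nonneg (hv a).1.le (elz_nonneg hv' s _)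
      linarith
    · have hm : m = (s.card : ℤ) + 1 := by omega
      have t1 : 0 < v a * elz v s (m - 1) :=
        mul_pos (hv a).1 (ih (m - 1) (by omega) (by omega))
      have t2 : 0 ≤ (1 - v a) * elz v s m :=
        mul_nonneg (by linarith [(hv a).2]) (elz_nonneg hv' s _)
      linarith


lemma elz_lc4 {v : Fin n → ℝ} (hv : ∀ l, 0 ≤ v l ∧ v l ≤ 1) (s : Finset (Fin n)) :
    ∀ a b c d : ℤ, a + d = b + c → a ≤ b → a ≤ c →
      elz v s a * elz v s d ≤ elz v s b * elz v s c := by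
  induction s using Finset.induction_on with
  | empty =>
    intro a b c d habcd hab hac
    simp only [elz_empty]
    by_cases ha : (0 : ℤ) = a
    · by_cases hd : (0 : ℤ) = d
      · have hb : (0 : ℤ) = b := by omega
        have hc : (0 : ℤ) = c := by omega
        rw [if_pos ha, if_pos hd, if_pos hb, if_pos hc]
      · rw [if_neg hd, mul_zero]
        positivity
    · rw [if_neg ha, zero_mul]
      positivity
  | @insert x s hx ih =>
    intro a b c d habcd hab hac
    -- middle-term helper
    have mid : ∀ a b c d : ℤ, a + d = b + c → a ≤ b → b ≤ c → c ≤ d →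
        elz v s a * elz v s (d-1) + elz v s (a-1) * elz v s d
          ≤ elz v s b * elz v s (c-1) + elz v s (b-1) * elz v s c := by
      intro a b c d habcd hab hbc hcd
      rcases eq_or_lt_of_le (hab.trans hbc) with h | h
      · have hba : b = a := by omega
        have hca : c = a := by omega
        have hda : d = a := by omega
        subst hba; subst hca; subst hda
        ring_nf
        exact le_refl _
      · have t1 : elz v s a * elz v s (d-1) ≤ elz v s b * elz v s (c-1) :=
          ih a b (c-1) (d-1) (by omega) hab (by omega)
        have t2 : elz v s (a-1) * elz v s d ≤ elz v s (b-1) * elz v s c :=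
          ih (a-1) (b-1) c d (by omega) (by omega) (by omega)
        linarith
    have mid' : elz v s a * elz v s (d-1) + elz v s (a-1) * elz v s d
          ≤ elz v s b * elz v s (c-1) + elz v s (b-1) * elz v s c := by
      rcases le_total b c with h | h
      · exact mid a b c d habcd hab h (by omega)
      · have := mid a c b d (by omega) hac h (by omega)
        linarith
    have t1 : elz v s a * elz v s d ≤ elz v s b * elz v s c := ih a b c d habcd hab hac
    have t2 : elz v s (a-1) * elz v s (d-1) ≤ elz v s (b-1) * elz v s (c-1) :=
      ih (a-1) (b-1) (c-1) (d-1) (by omega) (by omega) (by omega)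
    have hu : (0:ℝ) ≤ 1 - v x := by linarith [(hv x).2]
    have ht : (0:ℝ) ≤ v x := (hv x).1
    rw [elz_rec v hx, elz_rec v hx, elz_rec v hx, elz_rec v hx]
    have e1 : ((1 - v x) * elz v s a + v x * elz v s (a-1)) *
        ((1 - v x) * elz v s d + v x * elz v s (d-1))
        = (1 - v x)^2 * (elz v s a * elz v s d)
          + (1 - v x) * v x * (elz v s a * elz v s (d-1) + elz v s (a-1) * elz v s d)
          + (v x)^2 * (elz v s (a-1) * elz v s (d-1)) := by ring
    have e2 : ((1 - v x) * elz v s b + v x * elz v s (b-1)) *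
        ((1 - v x) * elz v s c + v x * elz v s (c-1))
        = (1 - v x)^2 * (elz v s b * elz v s c)
          + (1 - v x) * v x * (elz v s b * elz v s (c-1) + elz v s (b-1) * elz v s c)
          + (v x)^2 * (elz v s (b-1) * elz v s (c-1)) := by ring
    rw [e1, e2]
    have h1 : (1 - v x)^2 * (elz v s a * elz v s d) ≤ (1 - v x)^2 * (elz v s b * elz v s c) :=
      mul_le_mul_of_nonneg_left t1 (sq_nonneg _)
    have h2 : (1 - v x) * v x * (elz v s a * elz v s (d-1) + elz v s (a-1) * elz v s d)
        ≤ (1 - v x) * v x * (elz v s b * elz v s (c-1) + elz v s (b-1) * elz v s c) :=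
      mul_le_mul_of_nonneg_left mid' (mul_nonneg hu ht)
    have h3 : (v x)^2 * (elz v s (a-1) * elz v s (d-1))
        ≤ (v x)^2 * (elz v s (b-1) * elz v s (c-1)) :=
      mul_le_mul_of_nonneg_left t2 (sq_nonneg _)
    linarith

lemma Sz_eq_elz_add (v : Fin n → ℝ) (s : Finset (Fin n)) (m : ℤ) :
    Sz v s m = elz v s m + Sz v s (m + 1) := by
  rw [Sz, Sz, elz, ← Finset.sum_add_distrib]
  refine Finset.sum_congr rfl fun t ht => ?_
  by_cases h : (t.card : ℤ) = m
  · rw [if_pos (le_of_eq h.symm), if_pos h, if_neg (by omega)]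
    ring
  · by_cases h2 : m ≤ (t.card : ℤ)
    · rw [if_pos h2, if_neg h, if_pos (by omega)]
      ring
    · rw [if_neg h2, if_neg h, if_neg (by omega)]
      ring

lemma Sz_eq_sum_Icc (v : Fin n → ℝ) (s : Finset (Fin n)) (m : ℤ) :
    Sz v s m = ∑ l ∈ Finset.Icc m (s.card : ℤ), elz v s l := by
  simp only [elz]
  rw [Finset.sum_comm]
  rw [Sz]
  refine Finset.sum_congr rfl fun t ht => ?_
  rw [Finset.sum_ite_eq (Finset.Icc m (s.card : ℤ)) ((t.card : ℤ)) (fun _ => Wt v s t)]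
  have hc : (t.card : ℤ) ≤ (s.card : ℤ) := by
    exact_mod_cast Finset.card_le_card (Finset.mem_powerset.1 ht)
  by_cases h : m ≤ (t.card : ℤ)
  · rw [if_pos h, if_pos (Finset.mem_Icc.2 ⟨h, hc⟩)]
  · rw [if_neg h, if_neg (fun hm => h (Finset.mem_Icc.1 hm).1)]


lemma Sz_pos {v : Fin n → ℝ} (hv : ∀ l, 0 < v l ∧ v l < 1) (s : Finset (Fin n))
    {m : ℤ} (hm : m ≤ (s.card : ℤ)) : 0 < Sz v s m := by
  have hv' : ∀ l, 0 ≤ v l ∧ v l ≤ 1 := fun l => ⟨(hv l).1.le, (hv l).2.le⟩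
  rw [Sz_eq_sum_Icc]
  refine Finset.sum_pos' (fun l hl => elz_nonneg hv' s l) ?_
  refine ⟨(s.card : ℤ), Finset.mem_Icc.2 ⟨hm, le_refl _⟩, ?_⟩
  exact elz_pos hv s (s.card : ℤ) (by positivity) (le_refl _)

/-- The key strict inequality: `b_{k-1} A_{k-1} > b_{k-2} A_k`. -/
lemma delta_pos {v : Fin n → ℝ} (hv : ∀ l, 0 < v l ∧ v l < 1) (s : Finset (Fin n))
    {k : ℤ} (hk0 : 0 ≤ k - 1) (hkM : k - 1 ≤ (s.card : ℤ)) :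
    elz v s (k-2) * Sz v s k < elz v s (k-1) * Sz v s (k-1) := by
  have hv' : ∀ l, 0 ≤ v l ∧ v l ≤ 1 := fun l => ⟨(hv l).1.le, (hv l).2.le⟩
  set M : ℤ := (s.card : ℤ) with hM
  rw [Sz_eq_sum_Icc, Sz_eq_sum_Icc]
  -- rewrite the k-tail as a shifted sum over Icc (k-1) M
  have shift : ∑ l ∈ Finset.Icc k M, elz v s l
      = ∑ l ∈ Finset.Icc (k-1) M, elz v s (l+1) := by
    have hmap : (Finset.Icc (k-1) (M-1)).map (addRightEmbedding 1) = Finset.Icc k M := by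
      rw [Finset.map_add_right_Icc]
      congr 1 <;> omega
    rw [← hmap, Finset.sum_map]
    simp only [addRightEmbedding_apply]
    have hsplit : Finset.Icc (k-1) M = insert M (Finset.Icc (k-1) (M-1)) := by
      ext l
      simp only [Finset.mem_Icc, Finset.mem_insert]
      omega
    rw [hsplit, Finset.sum_insert (by simp only [Finset.mem_Icc]; omega)]
    have : elz v s (M + 1) = 0 := elz_zero_of_gt (by omega)
    rw [this, zero_add]
  rw [shift, Finset.mul_sum, Finset.mul_sum]
  refine Finset.sum_lt_sum (fun l hl => ?_) ⟨M, Finset.mem_Icc.2 ⟨hkM, le_refl _⟩, ?_⟩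
  · rcases Finset.mem_Icc.1 hl with ⟨h1, h2⟩
    exact elz_lc4 hv' s (k-2) (k-1) l (l+1) (by ring) (by omega) (by omega)
  · have h0 : elz v s (M + 1) = 0 := elz_zero_of_gt (by omega)
    rw [h0, mul_zero]
    exact mul_pos (elz_pos hv s (k-1) hk0 hkM) (elz_pos hv s M (by positivity) (le_refl _))

lemma Wt_congr {v w : Fin n → ℝ} {s : Finset (Fin n)} (h : ∀ l ∈ s, v l = w l)
    {t : Finset (Fin n)} (ht : t ⊆ s) : Wt v s t = Wt w s t := by
  rw [Wt, Wt]
  congr 1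
  · exact Finset.prod_congr rfl fun l hl => h l (ht hl)
  · exact Finset.prod_congr rfl fun l hl => by rw [h l (Finset.mem_sdiff.1 hl).1]

lemma elz_congr {v w : Fin n → ℝ} {s : Finset (Fin n)} (h : ∀ l ∈ s, v l = w l) (m : ℤ) :
    elz v s m = elz w s m :=
  Finset.sum_congr rfl fun t ht => by
    rw [Wt_congr h (Finset.mem_powerset.1 ht)]

lemma Sz_congr {v w : Fin n → ℝ} {s : Finset (Fin n)} (h : ∀ l ∈ s, v l = w l) (m : ℤ) :
    Sz v s m = Sz w s m :=
  Finset.sum_congr rfl fun t ht => by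
    rw [Wt_congr h (Finset.mem_powerset.1 ht)]


def confEquiv : (Fin n → Bool) ≃ Finset (Fin n) where
  toFun x := Finset.univ.filter (fun l => x l = true)
  invFun t := fun l => decide (l ∈ t)
  left_inv x := by funext l; simp
  right_inv t := by ext l; simp

lemma cnt_eq (x : Fin n → Bool) : cnt x = (Finset.univ.filter (fun l => x l = true)).card := by
  rw [cnt, Finset.card_filter]

lemma bw_eq (v : Fin n → ℝ) (x : Fin n → Bool) :
    bw v x = Wt v Finset.univ (Finset.univ.filter (fun l => x l = true)) := by
  rw [bw, Wt, Finset.prod_ite, ← Finset.filter_not]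

lemma bpr_eq (v : Fin n → ℝ) (A : (Fin n → Bool) → Prop) (P : Finset (Fin n) → Prop)
    [DecidablePred P]
    (hPA : ∀ x, A x ↔ P (Finset.univ.filter (fun l => x l = true))) :
    bpr v A = ∑ t ∈ Finset.univ.powerset, if P t then Wt v Finset.univ t else 0 := by
  rw [Finset.powerset_univ, bpr]
  refine Fintype.sum_equiv confEquiv _ (fun t => if P t then Wt v Finset.univ t else 0) fun x => ?_
  have hx : confEquiv x = Finset.univ.filter (fun l => x l = true) := rfl
  simp only [hx, bw_eq]
  by_cases h : A x
  · rw [if_pos h, if_pos ((hPA x).1 h)]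
  · rw [if_neg h, if_neg (fun hc => h ((hPA x).2 hc))]

lemma bpr_den (v : Fin n → ℝ) (k : ℕ) :
    bpr v (fun x => k ≤ cnt x) = Sz v Finset.univ (k : ℤ) := by
  rw [Sz, bpr_eq v _ (fun t => (k : ℤ) ≤ (t.card : ℤ)) (fun x => ?_)]
  rw [cnt_eq]
  constructor
  · intro h; exact_mod_cast h
  · intro h; exact_mod_cast h

lemma bpr_num (v : Fin n → ℝ) (i : Fin n) (k : ℕ) :
    bpr v (fun x => x i = true ∧ k ≤ cnt x) = SNz v i Finset.univ (k : ℤ) := by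
  rw [SNz, bpr_eq v _ (fun t => i ∈ t ∧ (k : ℤ) ≤ (t.card : ℤ)) (fun x => ?_)]
  rw [cnt_eq]
  constructor
  · rintro ⟨h1, h2⟩
    exact ⟨Finset.mem_filter.2 ⟨Finset.mem_univ i, h1⟩, by exact_mod_cast h2⟩
  · rintro ⟨h1, h2⟩
    exact ⟨(Finset.mem_filter.1 h1).2, by exact_mod_cast h2⟩


lemma core {v w : Fin n → ℝ} (hv : ∀ l, 0 < v l ∧ v l < 1) (hw : ∀ l, 0 < w l ∧ w l < 1)
    {i a : Fin n} (hai : a ≠ i) (hagree : ∀ l, l ≠ a → v l = w l) (hlt : v a < w a)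
    {k : ℕ} (hk1 : 1 ≤ k) (hk2 : k ≤ n - 1) :
    bpr w (fun x => x i = true ∧ k ≤ cnt x) / bpr w (fun x => k ≤ cnt x)
      < bpr v (fun x => x i = true ∧ k ≤ cnt x) / bpr v (fun x => k ≤ cnt x) := by
  have hn2 : 2 ≤ n := by
    rcases Nat.lt_or_ge n 2 with h | h
    · interval_cases n <;> omega
    · exact h
  set s2 : Finset (Fin n) := (Finset.univ.erase a).erase i with hs2
  have hia : i ≠ a := fun h => hai h.symm
  have hi_mem : i ∈ Finset.univ.erase a := Finset.mem_erase.2 ⟨hia, Finset.mem_univ i⟩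
  have ins1 : insert i s2 = Finset.univ.erase a := Finset.insert_erase hi_mem
  have ins2 : insert a (Finset.univ.erase a) = Finset.univ :=
    Finset.insert_erase (Finset.mem_univ a)
  have ha1 : a ∉ Finset.univ.erase a := Finset.notMem_erase a _
  have hi2 : i ∉ s2 := Finset.notMem_erase i _
  have hcard : (s2.card : ℤ) = (n : ℤ) - 2 := by
    rw [hs2, Finset.card_erase_of_mem hi_mem, Finset.card_erase_of_mem (Finset.mem_univ a),
      Finset.card_univ, Fintype.card_fin]
    push_cast
    omega
  have hkZ1 : (0:ℤ) ≤ (k:ℤ) - 1 := by push_cast; omega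
  have hkZ2 : (k:ℤ) - 1 ≤ (s2.card : ℤ) := by rw [hcard]; push_cast; omega
  -- shared quantities
  set Ak2 := Sz v s2 ((k:ℤ)-2) with hAk2d
  set Ak1 := Sz v s2 ((k:ℤ)-1) with hAk1d
  set Ak := Sz v s2 (k:ℤ) with hAkd
  set Bk2 := elz v s2 ((k:ℤ)-2) with hBk2d
  set Bk1 := elz v s2 ((k:ℤ)-1) with hBk1d
  set r := v i with hrd
  set t1 := v a with ht1d
  set t2 := w a with ht2d
  have hvw_s2 : ∀ l ∈ s2, v l = w l := fun l hl =>
    hagree l (Finset.mem_erase.1 (Finset.mem_erase.1 hl).2).1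
  have hwr : w i = r := (hagree i hia).symm
  have hv' : ∀ l, 0 ≤ v l ∧ v l ≤ 1 := fun l => ⟨(hv l).1.le, (hv l).2.le⟩
  -- tail difference identities
  have hA21 : Ak2 = Bk2 + Ak1 := by
    have := Sz_eq_elz_add v s2 ((k:ℤ)-2)
    have e : (k:ℤ) - 2 + 1 = (k:ℤ) - 1 := by ring
    rw [e] at this
    exact this
  have hA10 : Ak1 = Bk1 + Ak := by
    have := Sz_eq_elz_add v s2 ((k:ℤ)-1)
    have e : (k:ℤ) - 1 + 1 = (k:ℤ) := by ring
    rw [e] at this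
    exact this
  -- decompositions
  have decompN : ∀ u : Fin n → ℝ, u i = r → (∀ l ∈ s2, u l = v l) →
      SNz u i Finset.univ (k:ℤ)
        = r * ((u a) * Ak2 + (1 - u a) * Ak1) := by
    intro u hui hus
    have h1 := SNz_rec u ha1 hai (k:ℤ)
    rw [ins2] at h1
    have h2 := SNz_rec_i u hi2 (k:ℤ)
    have h3 := SNz_rec_i u hi2 ((k:ℤ)-1)
    rw [ins1] at h2 h3
    have c1 : Sz u s2 ((k:ℤ)-1) = Ak1 := Sz_congr hus _
    have c2 : Sz u s2 ((k:ℤ)-1-1) = Ak2 := by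
      have e : (k:ℤ) - 1 - 1 = (k:ℤ) - 2 := by ring
      rw [e]; exact Sz_congr hus _
    rw [h1, h2, h3, c1, c2, hui]
    ring
  have decompD : ∀ u : Fin n → ℝ, u i = r → (∀ l ∈ s2, u l = v l) →
      Sz u Finset.univ (k:ℤ)
        = r * ((u a) * Ak2 + (1 - u a) * Ak1)
          + (1 - r) * ((u a) * Ak1 + (1 - u a) * Ak) := by
    intro u hui hus
    have h1 := Sz_rec u ha1 (k:ℤ)
    rw [ins2] at h1
    have h2 := Sz_rec u hi2 (k:ℤ)
    have h3 := Sz_rec u hi2 ((k:ℤ)-1)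
    rw [ins1] at h2 h3
    have c1 : Sz u s2 (k:ℤ) = Ak := Sz_congr hus _
    have c2 : Sz u s2 ((k:ℤ)-1) = Ak1 := Sz_congr hus _
    have c3 : Sz u s2 ((k:ℤ)-1-1) = Ak2 := by
      have e : (k:ℤ) - 1 - 1 = (k:ℤ) - 2 := by ring
      rw [e]; exact Sz_congr hus _
    rw [h1, h2, h3, c1, c2, c3, hui]
    ring
  -- apply to v and w
  have eNv : bpr v (fun x => x i = true ∧ k ≤ cnt x) = r * (t1 * Ak2 + (1 - t1) * Ak1) := by
    rw [bpr_num]; exact decompN v rfl (fun l _ => rfl)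
  have eDv : bpr v (fun x => k ≤ cnt x)
      = r * (t1 * Ak2 + (1 - t1) * Ak1) + (1 - r) * (t1 * Ak1 + (1 - t1) * Ak) := by
    rw [bpr_den]; exact decompD v rfl (fun l _ => rfl)
  have eNw : bpr w (fun x => x i = true ∧ k ≤ cnt x) = r * (t2 * Ak2 + (1 - t2) * Ak1) := by
    rw [bpr_num]; exact decompN w hwr (fun l hl => (hvw_s2 l hl).symm)
  have eDw : bpr w (fun x => k ≤ cnt x)
      = r * (t2 * Ak2 + (1 - t2) * Ak1) + (1 - r) * (t2 * Ak1 + (1 - t2) * Ak) := by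
    rw [bpr_den]; exact decompD w hwr (fun l hl => (hvw_s2 l hl).symm)
  -- positivity
  have hr0 : 0 < r := (hv i).1
  have hr1 : r < 1 := (hv i).2
  have ht10 : 0 < t1 := (hv a).1
  have ht11 : t1 < 1 := (hv a).2
  have ht20 : 0 < t2 := (hw a).1
  have ht21 : t2 < 1 := (hw a).2
  have hAk1pos : 0 < Ak1 := Sz_pos hv s2 hkZ2
  have hAk2pos : 0 < Ak2 := Sz_pos hv s2 (by omega)
  have hAknn : 0 ≤ Ak := Sz_nonneg hv' s2 _
  have hBk1nn : 0 ≤ Bk1 := elz_nonneg hv' s2 _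
  have hBk2nn : 0 ≤ Bk2 := elz_nonneg hv' s2 _
  have hDelta : Bk2 * Ak < Bk1 * Ak1 := delta_pos hv s2 hkZ1 hkZ2
  have hDgen : ∀ t : ℝ, 0 < t → t < 1 →
      0 < r * (t * Ak2 + (1 - t) * Ak1) + (1 - r) * (t * Ak1 + (1 - t) * Ak) := by
    intro t h0 h1
    have hN : 0 < t * Ak2 + (1 - t) * Ak1 :=
      add_pos_of_pos_of_nonneg (mul_pos h0 hAk2pos)
        (mul_nonneg (by linarith) hAk1pos.le)
    have hD : 0 ≤ t * Ak1 + (1 - t) * Ak :=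
      add_nonneg (mul_nonneg h0.le hAk1pos.le) (mul_nonneg (by linarith) hAknn)
    have p1 : 0 < r * (t * Ak2 + (1 - t) * Ak1) := mul_pos hr0 hN
    have p2 : 0 ≤ (1 - r) * (t * Ak1 + (1 - t) * Ak) := mul_nonneg (by linarith) hD
    linarith
  have hDv := hDgen t1 ht10 ht11
  have hDw := hDgen t2 ht20 ht21
  rw [eNv, eDv, eNw, eDw, div_lt_div_iff₀ hDw hDv]
  have key : r * (t1 * Ak2 + (1 - t1) * Ak1)
        * (r * (t2 * Ak2 + (1 - t2) * Ak1) + (1 - r) * (t2 * Ak1 + (1 - t2) * Ak))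
      - r * (t2 * Ak2 + (1 - t2) * Ak1)
        * (r * (t1 * Ak2 + (1 - t1) * Ak1) + (1 - r) * (t1 * Ak1 + (1 - t1) * Ak))
      = r * (1 - r) * (t2 - t1) * (Bk1 * Ak1 - Bk2 * Ak) := by
    rw [hA21, hA10]
    ring
  have hprod : 0 < r * (1 - r) * (t2 - t1) * (Bk1 * Ak1 - Bk2 * Ak) :=
    mul_pos (mul_pos (mul_pos hr0 (by linarith : (0:ℝ) < 1 - r))
      (by linarith : (0:ℝ) < t2 - t1)) (by linarith : (0:ℝ) < Bk1 * Ak1 - Bk2 * Ak)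
  linarith [key.symm ▸ hprod]

lemma part1 {n : ℕ} (p q : Fin n → ℝ)
    (hpq : ∀ i, 0 < p i ∧ p i ≤ q i ∧ q i < 1)
    (k : ℕ) (hk1 : 1 ≤ k) (hk2 : k ≤ n - 1)
    (i : Fin n) (hpi : p i = q i) (j : Fin n) (hji : j ≠ i) (hj : p j < q j) :
    bpr q (fun x => x i = true ∧ k ≤ cnt x) / bpr q (fun x => k ≤ cnt x)
      < bpr p (fun x => x i = true ∧ k ≤ cnt x) / bpr p (fun x => k ≤ cnt x) := by
  classical
  set mix : Finset (Fin n) → (Fin n → ℝ) := fun s l => if l ∈ s then q l else p l with hmix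
  have hrange : ∀ s l, 0 < mix s l ∧ mix s l < 1 := by
    intro s l
    rcases hpq l with ⟨h1, h2, h3⟩
    by_cases h : l ∈ s <;> simp only [hmix, if_pos, if_neg, h, if_true, if_false] <;>
      constructor <;> linarith
  have main : ∀ s : Finset (Fin n),
      (bpr (mix s) (fun x => x i = true ∧ k ≤ cnt x) / bpr (mix s) (fun x => k ≤ cnt x)
        ≤ bpr p (fun x => x i = true ∧ k ≤ cnt x) / bpr p (fun x => k ≤ cnt x)) ∧
      (j ∈ s →
        bpr (mix s) (fun x => x i = true ∧ k ≤ cnt x) / bpr (mix s) (fun x => k ≤ cnt x)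
          < bpr p (fun x => x i = true ∧ k ≤ cnt x) / bpr p (fun x => k ≤ cnt x)) := by
    intro s
    induction s using Finset.induction_on with
    | empty =>
      have : mix ∅ = p := by
        funext l
        simp [hmix]
      rw [this]
      exact ⟨le_refl _, fun h => absurd h (Finset.notMem_empty j)⟩
    | @insert a s ha ih =>
      by_cases hpa : p a = q a
      · have hfun : mix (insert a s) = mix s := by
          funext l
          by_cases hl : l = a
          · subst hl
            simp only [hmix, Finset.mem_insert, true_or, if_true, if_neg ha, if_pos]
            exact hpa.symm
          · simp only [hmix]
            by_cases hls : l ∈ s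
            · rw [if_pos (Finset.mem_insert_of_mem hls), if_pos hls]
            · rw [if_neg (by simp [Finset.mem_insert, hl, hls]), if_neg hls]
        rw [hfun]
        refine ⟨ih.1, fun hjmem => ?_⟩
        rcases Finset.mem_insert.1 hjmem with h | h
        · exact absurd hj (by rw [h, hpa]; exact lt_irrefl _)
        · exact ih.2 h
      · have hlt : p a < q a := lt_of_le_of_ne (hpq a).2.1 hpa
        have hai : a ≠ i := by
          intro h
          rw [h] at hpa
          exact hpa hpi
        have hagree : ∀ l, l ≠ a → mix s l = mix (insert a s) l := by
          intro l hl
          simp only [hmix]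
          by_cases hls : l ∈ s
          · rw [if_pos hls, if_pos (Finset.mem_insert_of_mem hls)]
          · rw [if_neg hls, if_neg (by simp [Finset.mem_insert, hl, hls])]
        have hlt2 : mix s a < mix (insert a s) a := by
          simp only [hmix, if_neg ha, Finset.mem_insert, true_or, if_true, if_pos]
          exact hlt
        have step := core (hrange s) (hrange (insert a s)) hai hagree hlt2 hk1 hk2
        exact ⟨(lt_of_lt_of_le step ih.1).le, fun _ => lt_of_lt_of_le step ih.1⟩
  have hq : mix Finset.univ = q := by
    funext l
    simp [hmix]
  have := (main Finset.univ).2 (Finset.mem_univ j)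
  rwa [hq] at this

lemma marg_mono {n : ℕ} {μ ν : (Fin n → Bool) → ℝ} {c : (Fin n → Bool) → (Fin n → Bool) → ℝ}
    (hc0 : ∀ x y, 0 ≤ c x y) (hμ : ∀ x, ∑ y : Fin n → Bool, c x y = μ x)
    (hν : ∀ y, ∑ x : Fin n → Bool, c x y = ν y)
    (hord : ∀ x y, c x y ≠ 0 → x ≤ y) (i : Fin n) :
    (∑ x : Fin n → Bool, if x i = true then μ x else 0)
      ≤ ∑ y : Fin n → Bool, if y i = true then ν y else 0 := by
  have e1 : (∑ x : Fin n → Bool, if x i = true then μ x else 0)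
      = ∑ x : Fin n → Bool, ∑ y : Fin n → Bool, if x i = true then c x y else 0 := by
    refine Finset.sum_congr rfl fun x _ => ?_
    by_cases h : x i = true
    · simp only [if_pos h, hμ]
    · simp only [if_neg h, Finset.sum_const_zero]
  have e2 : (∑ y : Fin n → Bool, if y i = true then ν y else 0)
      = ∑ x : Fin n → Bool, ∑ y : Fin n → Bool, if y i = true then c x y else 0 := by
    rw [Finset.sum_comm]
    refine Finset.sum_congr rfl fun y _ => ?_
    by_cases h : y i = true
    · simp only [if_pos h, hν]
    · simp only [if_neg h, Finset.sum_const_zero]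
  rw [e1, e2]
  refine Finset.sum_le_sum fun x _ => Finset.sum_le_sum fun y _ => ?_
  rcases eq_or_ne (c x y) 0 with h | h
  · simp [h]
  · have hxy := hord x y h
    by_cases hxi : x i = true
    · have hyi : y i = true := by
        have hle : x i ≤ y i := hxy i
        rw [hxi] at hle
        cases hb : y i
        · rw [hb] at hle
          exact absurd hle (by decide)
        · rfl
      rw [if_pos hxi, if_pos hyi]
    · rw [if_neg hxi]
      by_cases hyi : y i = true
      · rw [if_pos hyi]
        exact hc0 x y
      · rw [if_neg hyi]

end Stmt7Aux

/-- if `p i = q i` for some but not all `i`, then the conditional law of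
`X` given `∑X ≥ k` is not stochastically dominated by that of `Y` given `∑Y ≥ k`;
in fact for any `i` with `p i = q i` and `p j < q j` for some `j ≠ i`,
`P(X_i = 1 | ∑X ≥ k) > P(Y_i = 1 | ∑Y ≥ k)`. -/
theorem stmt7 {n : ℕ} (p q : Fin n → ℝ)
    (hpq : ∀ i, 0 < p i ∧ p i ≤ q i ∧ q i < 1)
    (k : ℕ) (hk1 : 1 ≤ k) (hk2 : k ≤ n - 1) :
    (∀ i : Fin n, p i = q i → (∃ j, j ≠ i ∧ p j < q j) →
      bpr q (fun x => x i = true ∧ k ≤ cnt x) / bpr q (fun x => k ≤ cnt x)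
        < bpr p (fun x => x i = true ∧ k ≤ cnt x) / bpr p (fun x => k ≤ cnt x)) ∧
    ((∃ i, p i = q i) → (∃ j, p j < q j) →
      ¬ dominates (condPMF p (fun x => k ≤ cnt x)) (condPMF q (fun x => k ≤ cnt x))) := by
  constructor
  · rintro i hpi ⟨j, hji, hj⟩
    exact Stmt7Aux.part1 p q hpq k hk1 hk2 i hpi j hji hj
  · rintro ⟨i, hpi⟩ ⟨j, hj⟩ ⟨c, hc0, hc1, hc2, hc3⟩
    have hji : j ≠ i := by
      intro h
      rw [h, hpi] at hj
      exact lt_irrefl _ hj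
    have h1 := Stmt7Aux.part1 p q hpq k hk1 hk2 i hpi j hji hj
    have h2 := Stmt7Aux.marg_mono hc0 hc1 hc2 hc3 i
    have e : ∀ u : Fin n → ℝ,
        (∑ x : Fin n → Bool, if x i = true then condPMF u (fun x => k ≤ cnt x) x else 0)
        = bpr u (fun x => x i = true ∧ k ≤ cnt x) / bpr u (fun x => k ≤ cnt x) := by
      intro u
      simp only [condPMF, bpr]
      rw [Finset.sum_div]
      refine Finset.sum_congr rfl fun x _ => ?_
      by_cases hx1 : x i = true <;> by_cases hx2 : k ≤ cnt x <;> simp [hx1, hx2]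
    rw [e p, e q] at h2
    linarith
end
end

section
/- Let X be a random variable with distribution function F and Y a random variable with distribution function G. Then the supremum over all couplings of (X,Y) of P(X ≤ Y) equals inf_{z∈ℝ} (F(z) - G(z)) + 1. -/
open MeasureTheory
open scoped BigOperators

open Set Filter Topology ProbabilityTheory

section Stmt8Aux

/-- Quantile function of a measure on `ℝ` (junk value `0` outside `(0,1)`). -/
noncomputable def stmt8Quant (μ : Measure ℝ) (u : ℝ) : ℝ :=
  if 0 < u ∧ u < 1 then sInf {x | u ≤ cdf μ x} else 0

variable (μ : Measure ℝ)

lemma stmt8_quant_set_nonempty {u : ℝ} (hu1 : u < 1) : {x | u ≤ cdf μ x}.Nonempty := by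
  obtain ⟨x, hx⟩ := ((tendsto_cdf_atTop μ).eventually (eventually_ge_nhds hu1)).exists
  exact ⟨x, hx⟩

lemma stmt8_quant_set_bddBelow {u : ℝ} (hu0 : 0 < u) : BddBelow {x | u ≤ cdf μ x} := by
  obtain ⟨y, hy⟩ := ((tendsto_cdf_atBot μ).eventually (eventually_lt_nhds hu0)).exists
  refine ⟨y, fun z hz => ?_⟩
  by_contra h
  push_neg at h
  exact absurd (hz.trans (monotone_cdf μ h.le)) (not_le.2 hy)

lemma stmt8_quant_le_iff {u x : ℝ} (hu0 : 0 < u) (hu1 : u < 1) :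
    stmt8Quant μ u ≤ x ↔ u ≤ cdf μ x := by
  rw [stmt8Quant, if_pos ⟨hu0, hu1⟩]
  constructor
  · intro h
    have hev : ∀ᶠ z in 𝓝[>] x, u ≤ cdf μ z := by
      filter_upwards [self_mem_nhdsWithin] with z hz
      obtain ⟨w, hw, hwz⟩ := exists_lt_of_csInf_lt (stmt8_quant_set_nonempty μ hu1)
        (lt_of_le_of_lt h hz)
      exact hw.trans (monotone_cdf μ hwz.le)
    have htd : Tendsto (cdf μ) (𝓝[>] x) (𝓝 (cdf μ x)) :=
      ((cdf μ).right_continuous x).tendsto.mono_left (nhdsWithin_mono x Ioi_subset_Ici_self)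
    exact ge_of_tendsto htd hev
  · intro h
    exact csInf_le (stmt8_quant_set_bddBelow μ hu0) h

lemma stmt8_measurable_quant : Measurable (stmt8Quant μ) := by
  refine measurable_of_Iic fun x => ?_
  have : stmt8Quant μ ⁻¹' Iic x =
      (Ioo 0 1 ∩ Iic (cdf μ x)) ∪ ((Ioo (0:ℝ) 1)ᶜ ∩ {_u : ℝ | (0:ℝ) ≤ x}) := by
    ext u
    by_cases hu : 0 < u ∧ u < 1
    · simp only [mem_preimage, mem_Iic, mem_union, mem_inter_iff, mem_Ioo, mem_compl_iff,
        mem_setOf_eq, stmt8_quant_le_iff μ hu.1 hu.2]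
      tauto
    · simp only [mem_preimage, mem_Iic, stmt8Quant, if_neg hu, mem_union, mem_inter_iff, mem_Ioo,
        mem_compl_iff, mem_setOf_eq]
      tauto
  rw [this]
  refine (measurableSet_Ioo.inter measurableSet_Iic).union (measurableSet_Ioo.compl.inter ?_)
  by_cases h : (0:ℝ) ≤ x
  · simp [h]
  · simp [h]

lemma stmt8_map_quant [IsProbabilityMeasure μ] :
    (volume.restrict (Ioc (0:ℝ) 1)).map (stmt8Quant μ) = μ := by
  have : IsProbabilityMeasure (volume.restrict (Ioc (0:ℝ) 1)) :=
    ⟨by simp [Real.volume_Ioc]⟩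
  refine Measure.ext_of_Iic _ _ fun x => ?_
  rw [Measure.map_apply (stmt8_measurable_quant μ) measurableSet_Iic, Measure.restrict_apply
    (stmt8_measurable_quant μ measurableSet_Iic)]
  have hc0 : 0 ≤ cdf μ x := cdf_nonneg μ x
  have hc1 : cdf μ x ≤ 1 := cdf_le_one μ x
  have hsub1 : Ioo 0 (cdf μ x) ⊆ stmt8Quant μ ⁻¹' Iic x ∩ Ioc 0 1 := by
    intro u hu
    have hu1 : u < 1 := lt_of_lt_of_le hu.2 hc1
    exact ⟨(stmt8_quant_le_iff μ hu.1 hu1).2 hu.2.le, hu.1, hu1.le⟩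
  have hsub2 : stmt8Quant μ ⁻¹' Iic x ∩ Ioc 0 1 ⊆ Ioc 0 (cdf μ x) ∪ {1} := by
    rintro u ⟨h1, h2, h3⟩
    rcases lt_or_eq_of_le h3 with h | h
    · exact Or.inl ⟨h2, (stmt8_quant_le_iff μ h2 h).1 h1⟩
    · exact Or.inr h
  have hle : volume (stmt8Quant μ ⁻¹' Iic x ∩ Ioc 0 1) ≤ ENNReal.ofReal (cdf μ x) := by
    calc volume (stmt8Quant μ ⁻¹' Iic x ∩ Ioc 0 1) ≤ volume (Ioc 0 (cdf μ x) ∪ {1}) :=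
          measure_mono hsub2
      _ ≤ volume (Ioc 0 (cdf μ x)) + volume ({1} : Set ℝ) := measure_union_le _ _
      _ = ENNReal.ofReal (cdf μ x) := by simp [Real.volume_Ioc]
  have hge : ENNReal.ofReal (cdf μ x) ≤ volume (stmt8Quant μ ⁻¹' Iic x ∩ Ioc 0 1) := by
    calc ENNReal.ofReal (cdf μ x) = volume (Ioo 0 (cdf μ x)) := by simp [Real.volume_Ioo]
      _ ≤ _ := measure_mono hsub1
  rw [le_antisymm hle hge, ofReal_cdf]

/-- Rotation of the unit interval by `α`. -/
noncomputable def stmt8Rot (α u : ℝ) : ℝ := if u ≤ α then u + 1 - α else u - α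

lemma stmt8_measurable_rot (α : ℝ) : Measurable (stmt8Rot α) := by
  unfold stmt8Rot
  exact Measurable.ite measurableSet_Iic (by fun_prop) (by fun_prop)

lemma stmt8_ofReal_eq_max (x : ℝ) : ENNReal.ofReal x = ENNReal.ofReal (max x 0) := by
  rcases le_total x 0 with h | h
  · simp [ENNReal.ofReal_of_nonpos h, max_eq_right h]
  · simp [max_eq_left h]

lemma stmt8_map_rot {α : ℝ} (h0 : 0 ≤ α) (h1 : α ≤ 1) :
    (volume.restrict (Ioc (0:ℝ) 1)).map (stmt8Rot α) = volume.restrict (Ioc (0:ℝ) 1) := by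
  have : IsProbabilityMeasure (volume.restrict (Ioc (0:ℝ) 1)) :=
    ⟨by simp [Real.volume_Ioc]⟩
  refine Measure.ext_of_Iic _ _ fun x => ?_
  rw [Measure.map_apply (stmt8_measurable_rot α) measurableSet_Iic,
    Measure.restrict_apply (stmt8_measurable_rot α measurableSet_Iic),
    Measure.restrict_apply measurableSet_Iic]
  have hset : stmt8Rot α ⁻¹' Iic x ∩ Ioc 0 1 =
      Ioc 0 (min α (x - 1 + α)) ∪ Ioc α (min 1 (x + α)) := by
    ext u
    simp only [mem_inter_iff, mem_preimage, mem_Iic, mem_Ioc, mem_union, stmt8Rot, le_min_iff]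
    split_ifs with hu
    · constructor
      · rintro ⟨hx, h0u, _⟩; exact Or.inl ⟨h0u, hu, by linarith⟩
      · rintro (⟨h0u, _, hx⟩ | ⟨hαu, _, _⟩)
        · exact ⟨by linarith, h0u, by linarith⟩
        · linarith
    · push_neg at hu
      constructor
      · rintro ⟨hx, h0u, hu1⟩; exact Or.inr ⟨hu, hu1, by linarith⟩
      · rintro (⟨h0u, huα, hx⟩ | ⟨hαu, hu1, hx⟩)
        · linarith
        · exact ⟨by linarith, by linarith, hu1⟩
  have hdisj : Disjoint (Ioc (0:ℝ) (min α (x - 1 + α))) (Ioc α (min 1 (x + α))) := by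
    rw [Set.disjoint_left]
    rintro u ⟨_, hu2⟩ ⟨hu3, _⟩
    exact absurd (hu2.trans (min_le_left _ _)) (not_le.2 hu3)
  rw [hset, measure_union hdisj measurableSet_Ioc, inter_comm, Ioc_inter_Iic,
    Real.volume_Ioc, Real.volume_Ioc, Real.volume_Ioc, sub_zero, sub_zero,
    stmt8_ofReal_eq_max (min α (x - 1 + α)), stmt8_ofReal_eq_max (min 1 (x + α) - α),
    stmt8_ofReal_eq_max (min 1 x), ← ENNReal.ofReal_add (le_max_right _ _) (le_max_right _ _)]
  congr 1
  simp only [min_def, max_def]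
  split_ifs <;> linarith

lemma stmt8_coupling_le (μ ν : Measure ℝ) [IsProbabilityMeasure μ] [IsProbabilityMeasure ν]
    (π : Measure (ℝ × ℝ)) (hπ : IsProbabilityMeasure π)
    (hfst : π.map Prod.fst = μ) (hsnd : π.map Prod.snd = ν) (z : ℝ) :
    (π {x : ℝ × ℝ | x.1 ≤ x.2}).toReal ≤ (cdf μ z - cdf ν z) + 1 := by
  set E : Set (ℝ × ℝ) := {x : ℝ × ℝ | x.1 ≤ x.2} with hE_def
  have hE : MeasurableSet E := measurableSet_le measurable_fst measurable_snd
  set A : Set (ℝ × ℝ) := Prod.snd ⁻¹' Iic z ∩ Prod.fst ⁻¹' Iic z with hA_def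
  set B : Set (ℝ × ℝ) := Prod.snd ⁻¹' Iic z ∩ Prod.fst ⁻¹' Ioi z with hB_def
  have hAmeas : MeasurableSet A :=
    (measurable_snd measurableSet_Iic).inter (measurable_fst measurableSet_Iic)
  have hBmeas : MeasurableSet B :=
    (measurable_snd measurableSet_Iic).inter (measurable_fst measurableSet_Ioi)
  have hAB : Prod.snd ⁻¹' Iic z = A ∪ B := by
    ext p
    simp only [hA_def, hB_def, mem_preimage, mem_Iic, mem_union, mem_inter_iff, mem_Ioi]
    rcases le_or_gt p.1 z with h | h
    · tauto
    · tauto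
  have hdisjAB : Disjoint A B := by
    rw [Set.disjoint_left]
    rintro p ⟨_, h2⟩ ⟨_, h4⟩
    have h2' : p.1 ≤ z := h2
    have h4' : z < p.1 := h4
    linarith
  have hν : π A + π B = ν (Iic z) := by
    rw [← measure_union hdisjAB hBmeas, ← hAB, ← hsnd,
      Measure.map_apply measurable_snd measurableSet_Iic]
  have hμA : π A ≤ μ (Iic z) := by
    rw [← hfst, Measure.map_apply measurable_fst measurableSet_Iic]
    exact measure_mono inter_subset_right
  have hdisjEB : Disjoint E B := by
    rw [Set.disjoint_left]
    rintro p hp ⟨h2, h4⟩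
    have hp' : p.1 ≤ p.2 := hp
    have h2' : p.2 ≤ z := h2
    have h4' : z < p.1 := h4
    linarith
  have hEB : π E + π B ≤ 1 := by
    rw [← measure_union hdisjEB hBmeas]
    exact prob_le_one
  have h1 : (π A).toReal + (π B).toReal = (ν (Iic z)).toReal := by
    rw [← ENNReal.toReal_add (measure_ne_top π _) (measure_ne_top π _), hν]
  have h2 : (π E).toReal + (π B).toReal ≤ 1 := by
    have := ENNReal.toReal_mono ENNReal.one_ne_top hEB
    rwa [ENNReal.toReal_add (measure_ne_top π _) (measure_ne_top π _), ENNReal.toReal_one]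
      at this
  have h3 : (π A).toReal ≤ (μ (Iic z)).toReal :=
    ENNReal.toReal_mono (measure_ne_top μ _) hμA
  rw [cdf_eq_real, cdf_eq_real, measureReal_def, measureReal_def]
  linarith

end Stmt8Aux

/-- the supremum over all couplings of `(X, Y)` of `P(X ≤ Y)` equals
`inf_z (F(z) − G(z)) + 1`, where `F`, `G` are the distribution functions of `X`, `Y`. -/
theorem stmt8 (μ ν : Measure ℝ) [IsProbabilityMeasure μ] [IsProbabilityMeasure ν] :
    sSup {r : ℝ | ∃ π : Measure (ℝ × ℝ), IsProbabilityMeasure π ∧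
        π.map Prod.fst = μ ∧ π.map Prod.snd = ν ∧
        r = (π {x : ℝ × ℝ | x.1 ≤ x.2}).toReal}
      = (⨅ z : ℝ, (μ (Set.Iic z)).toReal - (ν (Set.Iic z)).toReal) + 1 := by
  classical
  set S := {r : ℝ | ∃ π : Measure (ℝ × ℝ), IsProbabilityMeasure π ∧
      π.map Prod.fst = μ ∧ π.map Prod.snd = ν ∧
      r = (π {x : ℝ × ℝ | x.1 ≤ x.2}).toReal} with hS_def
  set f : ℝ → ℝ := fun z => cdf μ z - cdf ν z with hf_def
  have hfun : (fun z => (μ (Set.Iic z)).toReal - (ν (Set.Iic z)).toReal) = f := by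
    funext z
    simp only [hf_def]
    rw [cdf_eq_real, cdf_eq_real, measureReal_def, measureReal_def]
  rw [show (⨅ z : ℝ, (μ (Set.Iic z)).toReal - (ν (Set.Iic z)).toReal) = ⨅ z : ℝ, f z by
    rw [hfun]]
  set a : ℝ := ⨅ z : ℝ, f z with ha_def
  have hbdd : BddBelow (Set.range f) := by
    refine ⟨-1, ?_⟩
    rintro r ⟨z, rfl⟩
    have h1 := cdf_le_one μ z
    have h2 := cdf_nonneg ν z
    have h3 := cdf_nonneg μ z
    have h4 := cdf_le_one ν z
    simp only [hf_def]
    linarith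
  have ha_le : ∀ z, a ≤ f z := fun z => ciInf_le hbdd z
  have htend : Tendsto f atTop (𝓝 0) := by
    have := (tendsto_cdf_atTop μ).sub (tendsto_cdf_atTop ν)
    simpa using this
  have ha_nonpos : a ≤ 0 := ge_of_tendsto' htend ha_le
  have ha_ge : -1 ≤ a := by
    refine le_ciInf fun z => ?_
    have h3 := cdf_nonneg μ z
    have h4 := cdf_le_one ν z
    simp only [hf_def]
    linarith
  set α : ℝ := -a with hα_def
  have hα0 : 0 ≤ α := by linarith
  have hα1 : α ≤ 1 := by linarith
  set P : Measure ℝ := volume.restrict (Ioc (0:ℝ) 1) with hP_def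
  haveI hPprob : IsProbabilityMeasure P := ⟨by simp [hP_def, Real.volume_Ioc]⟩
  set g : ℝ → ℝ × ℝ := fun u => (stmt8Quant μ (stmt8Rot α u), stmt8Quant ν u) with hg_def
  have hg : Measurable g :=
    ((stmt8_measurable_quant μ).comp (stmt8_measurable_rot α)).prodMk (stmt8_measurable_quant ν)
  set π0 : Measure (ℝ × ℝ) := P.map g with hπ0_def
  haveI hπ0prob : IsProbabilityMeasure π0 := Measure.isProbabilityMeasure_map hg.aemeasurable
  have hfst : π0.map Prod.fst = μ := by
    rw [hπ0_def, Measure.map_map measurable_fst hg]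
    have : (Prod.fst ∘ g) = (stmt8Quant μ) ∘ (stmt8Rot α) := rfl
    rw [this, ← Measure.map_map (stmt8_measurable_quant μ) (stmt8_measurable_rot α),
      hP_def, stmt8_map_rot hα0 hα1, stmt8_map_quant]
  have hsnd : π0.map Prod.snd = ν := by
    rw [hπ0_def, Measure.map_map measurable_snd hg]
    have : (Prod.snd ∘ g) = stmt8Quant ν := rfl
    rw [this, hP_def, stmt8_map_quant]
  have hE : MeasurableSet {x : ℝ × ℝ | x.1 ≤ x.2} :=
    measurableSet_le measurable_fst measurable_snd
  have hlow : ENNReal.ofReal (1 - α) ≤ π0 {x : ℝ × ℝ | x.1 ≤ x.2} := by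
    rw [hπ0_def, Measure.map_apply hg hE, hP_def, Measure.restrict_apply (hg hE)]
    have hsub : Ioo α 1 ⊆ g ⁻¹' {x : ℝ × ℝ | x.1 ≤ x.2} ∩ Ioc 0 1 := by
      intro u hu
      have hu0 : 0 < u := lt_of_le_of_lt hα0 hu.1
      refine ⟨?_, hu0, hu.2.le⟩
      show stmt8Quant μ (stmt8Rot α u) ≤ stmt8Quant ν u
      have hrot : stmt8Rot α u = u - α := if_neg (not_le.2 hu.1)
      have hq : stmt8Quant ν u = sInf {x | u ≤ cdf ν x} := by
        unfold stmt8Quant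
        rw [if_pos ⟨hu0, hu.2⟩]
      rw [hrot, hq]
      refine le_csInf (stmt8_quant_set_nonempty ν hu.2) fun x hx => ?_
      have hfx := ha_le x
      simp only [hf_def] at hfx
      have hx' : u ≤ cdf ν x := hx
      have h5 : u - α ≤ cdf μ x := by linarith
      exact (stmt8_quant_le_iff μ (by linarith [hu.1]) (by linarith [hu.2])).2 h5
    calc ENNReal.ofReal (1 - α) = volume (Ioo α 1) := by rw [Real.volume_Ioo]
      _ ≤ _ := measure_mono hsub
  set r0 : ℝ := (π0 {x : ℝ × ℝ | x.1 ≤ x.2}).toReal with hr0_def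
  have hlow' : a + 1 ≤ r0 := by
    have h := ENNReal.toReal_mono (measure_ne_top π0 _) hlow
    rw [ENNReal.toReal_ofReal (by linarith : (0:ℝ) ≤ 1 - α)] at h
    linarith
  have hub : ∀ r ∈ S, r ≤ a + 1 := by
    rintro r ⟨π, hπ, h1, h2, rfl⟩
    have key : ∀ z, (π {x : ℝ × ℝ | x.1 ≤ x.2}).toReal - 1 ≤ f z := fun z => by
      have := stmt8_coupling_le μ ν π hπ h1 h2 z
      simp only [hf_def]
      linarith
    have : (π {x : ℝ × ℝ | x.1 ≤ x.2}).toReal - 1 ≤ a := le_ciInf key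
    linarith
  have hmem : r0 ∈ S := ⟨π0, hπ0prob, hfst, hsnd, rfl⟩
  have hr0 : r0 = a + 1 := le_antisymm (hub r0 hmem) hlow'
  refine le_antisymm (csSup_le ⟨r0, hmem⟩ hub) ?_
  calc a + 1 = r0 := hr0.symm
    _ ≤ sSup S := le_csSup ⟨a + 1, hub⟩ hmem
end

section
/- For every positive integer m, m! = √(2π(m+η_m)) · m^m · e^{-m} for some η_m with 1/7 < η_m < 1/5; moreover this representation extends to m = 0 (where 0! = 1 = √(2πη_0) · 1 for some η_0 ∈ (1/7,1/5)). -/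
open Stirling Real Filter Nat Topology


lemma diff_ge (m : ℕ) :
    (1/3 : ℝ) * (1 / (2 * ((m:ℝ)+1) + 1))^2
      ≤ Real.log (stirlingSeq (m+1)) - Real.log (stirlingSeq (m+2)) := by
  have h := le_hasSum (log_stirlingSeq_diff_hasSum m) 0 (fun k _ => by positivity)
  push_cast at h ⊢
  convert h using 2 <;> norm_num <;> rfl

lemma diff_le (m : ℕ) :
    Real.log (stirlingSeq (m+1)) - Real.log (stirlingSeq (m+2))
      ≤ 1 / (12 * ((m:ℝ)+1) * ((m:ℝ)+2)) := by
  set q : ℝ := (1 / (2 * ((m+1 : ℕ):ℝ) + 1))^2 with hq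
  have hq0 : (0:ℝ) ≤ q := sq_nonneg _
  have hq1 : q < 1 := by
    rw [hq, one_div, inv_pow]
    exact inv_lt_one_of_one_lt₀ (one_lt_pow₀ (by push_cast; nlinarith [Nat.cast_nonneg (α := ℝ) m]) two_ne_zero)
  have g : HasSum (fun k : ℕ => (1/3 : ℝ) * q ^ (k+1)) (1/3 * (q / (1 - q))) := by
    have := (hasSum_geometric_of_lt_one hq0 hq1).mul_left (1/3 * q)
    simp_rw [mul_assoc, ← _root_.pow_succ'] at this
    exact this
  have hle := hasSum_le (fun k => ?_) (log_stirlingSeq_diff_hasSum m) g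
  · refine hle.trans (le_of_eq ?_)
    have h1q : (0:ℝ) < 1 - q := sub_pos.mpr hq1
    have e1 : q / (1-q) = 1/(4*((m:ℝ)+1)*((m:ℝ)+2)) := by
      rw [div_eq_div_iff h1q.ne' (by positivity : (4*((m:ℝ)+1)*((m:ℝ)+2)) ≠ 0), hq]
      have h3 : (2 * (((m+1:ℕ)):ℝ) + 1) ≠ 0 := by positivity
      field_simp
      push_cast
      ring
    rw [e1]
    have ha : ((m:ℝ)+1) ≠ 0 := by positivity
    have hb : ((m:ℝ)+2) ≠ 0 := by positivity
    field_simp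
    ring
  · have hk : ((1:ℝ) / (2 * ((k+1:ℕ):ℝ) + 1)) ≤ 1/3 := by
      rw [div_le_div_iff₀ (by positivity) (by norm_num)]
      push_cast
      nlinarith [Nat.cast_nonneg (α := ℝ) k]
    exact mul_le_mul_of_nonneg_right hk (pow_nonneg hq0 (k+1))




lemma tele_le (n : ℕ) : ∀ k : ℕ,
    Real.log (stirlingSeq (n+1)) - Real.log (stirlingSeq (n+1+k))
      ≤ 1/(12*((n:ℝ)+1)) - 1/(12*((n:ℝ)+1+k)) := by
  intro k
  induction k with
  | zero => simp
  | succ k ih =>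
    have hd := diff_le (n+k)
    have harr : n+1+(k+1) = (n+k)+2 := by ring
    have harr2 : n+1+k = (n+k)+1 := by ring
    rw [harr]
    rw [harr2] at ih
    have key : (1:ℝ) / (12 * (((n+k:ℕ):ℝ)+1) * (((n+k:ℕ):ℝ)+2))
        = 1/(12*((n:ℝ)+1+k)) - 1/(12*((n:ℝ)+1+(k+1))) := by
      push_cast
      have h1 : (12*((n:ℝ)+1+k)) ≠ 0 := by positivity
      have h2 : (12*((n:ℝ)+1+(k+1))) ≠ 0 := by positivity
      field_simp
      ring
    push_cast at key ih hd ⊢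
    linarith

lemma tele_ge (n : ℕ) : ∀ k : ℕ,
    1/(12*((n:ℝ)+1)+1) - 1/(12*((n:ℝ)+1+k)+1)
      ≤ Real.log (stirlingSeq (n+1)) - Real.log (stirlingSeq (n+1+k)) := by
  intro k
  induction k with
  | zero => simp
  | succ k ih =>
    have hd := diff_ge (n+k)
    have harr : n+1+(k+1) = (n+k)+2 := by ring
    have harr2 : n+1+k = (n+k)+1 := by ring
    rw [harr]
    rw [harr2] at ih
    have key : (1:ℝ)/(12*((n:ℝ)+1+k)+1) - 1/(12*((n:ℝ)+1+(k+1))+1)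
        ≤ (1/3 : ℝ) * (1 / (2 * (((n+k:ℕ):ℝ)+1) + 1))^2 := by
      push_cast
      set j : ℝ := (n:ℝ)+1+k with hj
      have hj1 : (1:ℝ) ≤ j := by
        have := Nat.cast_nonneg (α := ℝ) n
        have := Nat.cast_nonneg (α := ℝ) k
        simp [hj]; linarith
      have h1 : (12*j+1) > 0 := by linarith
      have h2 : (12*(j+1)+1) > 0 := by linarith
      have h3 : (2*j+1) > 0 := by linarith
      have e1 : (n:ℝ)+k+1 = j := by rw [hj]; ring
      rw [show ((n:ℝ)+1+(k+1)) = j + 1 by rw [hj]; ring, e1]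
      rw [show (1/3:ℝ)*(1/(2*j+1))^2 = 1/(3*(2*j+1)^2) by rw [div_pow, one_pow, one_div, one_div, one_div, mul_inv]]
      rw [div_sub_div _ _ h1.ne' h2.ne', div_le_div_iff₀ (by positivity) (by positivity)]
      nlinarith [sq_nonneg (2*j+1), sq_nonneg j, mul_pos h1 h2]
    push_cast at key ih hd ⊢
    linarith

lemma robbins_log (n : ℕ) :
    1/(12*((n:ℝ)+1)+1) ≤ Real.log (stirlingSeq (n+1)) - Real.log (Real.sqrt π) ∧
    Real.log (stirlingSeq (n+1)) - Real.log (Real.sqrt π) ≤ 1/(12*((n:ℝ)+1)) := by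
  have hπ : (0:ℝ) < Real.sqrt π := Real.sqrt_pos.mpr Real.pi_pos
  have hlim : Tendsto (fun k : ℕ => Real.log (stirlingSeq (n+1+k))) atTop
      (𝓝 (Real.log (Real.sqrt π))) := by
    have := (Real.continuousAt_log hπ.ne').tendsto.comp
      (tendsto_stirlingSeq_sqrt_pi.comp (tendsto_add_atTop_nat (n+1)))
    simpa [Function.comp_def, add_comm] using this
  have hF : Tendsto (fun k : ℕ => Real.log (stirlingSeq (n+1)) - Real.log (stirlingSeq (n+1+k)))
      atTop (𝓝 (Real.log (stirlingSeq (n+1)) - Real.log (Real.sqrt π))) :=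
    tendsto_const_nhds.sub hlim
  constructor
  · have hden : Tendsto (fun k : ℕ => 12*((n:ℝ)+1+k)+1) atTop atTop := by
      apply tendsto_atTop_add_const_right
      apply Tendsto.const_mul_atTop (by norm_num : (0:ℝ) < 12)
      exact tendsto_atTop_add_const_left _ _ tendsto_natCast_atTop_atTop
    have hzero : Tendsto (fun k : ℕ => 1/(12*((n:ℝ)+1+k)+1)) atTop (𝓝 0) := by
      simpa [one_div, Pi.inv_def] using hden.inv_tendsto_atTop
    have hG : Tendsto (fun k : ℕ => 1/(12*((n:ℝ)+1)+1) - 1/(12*((n:ℝ)+1+k)+1)) atTop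
        (𝓝 (1/(12*((n:ℝ)+1)+1) - 0)) := tendsto_const_nhds.sub hzero
    rw [sub_zero] at hG
    exact le_of_tendsto_of_tendsto' hG hF (fun k => tele_ge n k)
  · exact le_of_tendsto' hF (fun k => (tele_le n k).trans (by
      have : (0:ℝ) < 12*((n:ℝ)+1+k) := by positivity
      have h2 : (0:ℝ) ≤ 1/(12*((n:ℝ)+1+k)) := by positivity
      linarith))

lemma robbins (n : ℕ) :
    Real.exp (1/(12*((n:ℝ)+1)+1)) * Real.sqrt π ≤ stirlingSeq (n+1) ∧
    stirlingSeq (n+1) ≤ Real.exp (1/(12*((n:ℝ)+1))) * Real.sqrt π := by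
  have hπ : (0:ℝ) < Real.sqrt π := Real.sqrt_pos.mpr Real.pi_pos
  have hs : (0:ℝ) < stirlingSeq (n+1) := stirlingSeq'_pos n
  obtain ⟨h1, h2⟩ := robbins_log n
  have he : Real.exp (Real.log (stirlingSeq (n+1)) - Real.log (Real.sqrt π))
      = stirlingSeq (n+1) / Real.sqrt π := by
    rw [Real.exp_sub, Real.exp_log hs, Real.exp_log hπ]
  constructor
  · have := Real.exp_le_exp.mpr h1
    rw [he] at this
    calc Real.exp (1/(12*((n:ℝ)+1)+1)) * Real.sqrt π
        ≤ (stirlingSeq (n+1) / Real.sqrt π) * Real.sqrt π := by gcongr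
      _ = stirlingSeq (n+1) := by field_simp
  · have := Real.exp_le_exp.mpr h2
    rw [he] at this
    calc stirlingSeq (n+1) = (stirlingSeq (n+1) / Real.sqrt π) * Real.sqrt π := by field_simp
      _ ≤ Real.exp (1/(12*((n:ℝ)+1))) * Real.sqrt π := by gcongr




/-- for every `m ≥ 0` there exists `η_m ∈ (1/7, 1/5)` such that
`m! = √(2π(m+η_m)) · m^m · e^{−m}` (with `0^0 = 1`). -/
theorem stmt9 (m : ℕ) :
    ∃ η : ℝ, 1 / 7 < η ∧ η < 1 / 5 ∧
      (m.factorial : ℝ)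
        = Real.sqrt (2 * Real.pi * ((m : ℝ) + η)) * (m : ℝ) ^ m * Real.exp (-(m : ℝ)) := by
  have hπ : (0:ℝ) < π := Real.pi_pos
  obtain _ | n := m
  · refine ⟨1/(2*π), ?_, ?_, ?_⟩
    · rw [div_lt_div_iff₀ (by norm_num) (by positivity)]
      nlinarith [Real.pi_lt_d2]
    · rw [div_lt_div_iff₀ (by positivity) (by norm_num)]
      nlinarith [Real.pi_gt_three]
    · norm_num
      rw [show (2:ℝ)*π*(π⁻¹*(1/2)) = 1 by field_simp, Real.sqrt_one]
  · set M : ℝ := (n:ℝ) + 1 with hM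
    have hM1 : (1:ℝ) ≤ M := by rw [hM]; have := Nat.cast_nonneg (α := ℝ) n; linarith
    have hM0 : (0:ℝ) < M := by linarith
    set s : ℝ := stirlingSeq (n+1) with hs
    have hs0 : (0:ℝ) < s := stirlingSeq'_pos n
    have hsπ : (0:ℝ) < Real.sqrt π := Real.sqrt_pos.mpr hπ
    obtain ⟨hlo, hhi⟩ := robbins n
    set η : ℝ := M * s^2 / π - M with hη
    have hsq_lo : Real.exp (2/(12*M+1)) * π ≤ s^2 := by
      have h := mul_le_mul hlo hlo (by positivity) hs0.le
      calc Real.exp (2/(12*M+1)) * π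
          = (Real.exp (1/(12*M+1)) * Real.sqrt π) * (Real.exp (1/(12*M+1)) * Real.sqrt π) := by
            rw [mul_mul_mul_comm, ← Real.exp_add, Real.mul_self_sqrt hπ.le, ← add_div]
            norm_num
        _ ≤ s * s := h
        _ = s^2 := (sq s).symm
    have hsq_hi : s^2 ≤ Real.exp (1/(6*M)) * π := by
      have h := mul_le_mul hhi hhi hs0.le (by positivity)
      calc s^2 = s * s := sq s
        _ ≤ (Real.exp (1/(12*M)) * Real.sqrt π) * (Real.exp (1/(12*M)) * Real.sqrt π) := h
        _ = Real.exp (1/(6*M)) * π := by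
            rw [mul_mul_mul_comm, ← Real.exp_add, Real.mul_self_sqrt hπ.le, ← add_div,
              show (1+1:ℝ)/(12*M) = 1/(6*M) by
                rw [div_eq_div_iff (by positivity) (by positivity)]; ring]
    refine ⟨η, ?_, ?_, ?_⟩
    · -- lower bound
      have h1 : M * Real.exp (2/(12*M+1)) - M ≤ η := by
        rw [hη]
        have step : M * Real.exp (2/(12*M+1)) = M * (Real.exp (2/(12*M+1)) * π) / π := by
          rw [← mul_assoc, mul_div_cancel_right₀ _ hπ.ne']
        rw [step]
        gcongr
      have hE := Real.add_one_le_exp (2/(12*M+1))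
      have hmul := mul_le_mul_of_nonneg_left hE hM0.le
      have e : 2*M/(12*M+1) = M*(2/(12*M+1)) := by ring
      have h3 : (1:ℝ)/7 < 2*M/(12*M+1) := by
        rw [div_lt_div_iff₀ (by norm_num) (by linarith)]
        linarith
      nlinarith [h1, hmul, h3]
    · -- upper bound
      have hx : (0:ℝ) < 1 - 1/(6*M) := by
        rw [sub_pos, div_lt_one (by positivity)]
        linarith
      have hexp : Real.exp (1/(6*M)) < (1 - 1/(6*M))⁻¹ := by
        have h' := Real.add_one_lt_exp (neg_ne_zero.mpr (show (1/(6*M)) ≠ 0 by positivity))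
        have h2 : (Real.exp (-(1/(6*M))))⁻¹ < (1 - 1/(6*M))⁻¹ := by
          apply inv_strictAnti₀ hx
          linarith
        rwa [Real.exp_neg, inv_inv] at h2
      have h1 : η < M * (1 - 1/(6*M))⁻¹ - M := by
        rw [hη]
        have hub : M * s^2 / π ≤ M * Real.exp (1/(6*M)) := by
          rw [div_le_iff₀ hπ]
          calc M * s^2 ≤ M * (Real.exp (1/(6*M)) * π) := by gcongr
            _ = M * Real.exp (1/(6*M)) * π := by ring
        have h5 : M * Real.exp (1/(6*M)) < M * (1 - 1/(6*M))⁻¹ := by gcongr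
        linarith
      have h2 : M * (1 - 1/(6*M))⁻¹ - M ≤ 1/5 := by
        have h6 : (0:ℝ) < 6*M - 1 := by linarith
        have e : (1 - 1/(6*M))⁻¹ = 6*M/(6*M-1) := by
          rw [inv_eq_one_div, div_eq_div_iff hx.ne' h6.ne']
          field_simp
        rw [e]
        have e2 : M * (6*M/(6*M-1)) - M = M/(6*M-1) := by rw [eq_div_iff h6.ne', sub_mul, mul_assoc, div_mul_cancel₀ _ h6.ne']; ring
        rw [e2, div_le_div_iff₀ h6 (by norm_num)]
        linarith
      linarith
    · -- the equation
      have hfac : ((n+1).factorial : ℝ) = s * (Real.sqrt (2*M) * (M / Real.exp 1)^(n+1)) := by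
        have hME : (0:ℝ) < ((n:ℝ)+1) / Real.exp 1 := by positivity
        have hd : (Real.sqrt (2*((n:ℝ)+1)) * ((((n:ℝ)+1)) / Real.exp 1)^(n+1)) ≠ 0 := by positivity
        rw [hs, stirlingSeq]
        push_cast
        exact (div_mul_cancel₀ _ hd).symm
      have hkey : Real.sqrt (2 * π * ((((n+1:ℕ)):ℝ) + η)) = Real.sqrt (2*M) * s := by
        have e1 : (((n+1:ℕ)):ℝ) = M := by rw [hM]; push_cast; ring
        have e2 : 2 * π * (M + η) = (2*M) * s^2 := by
          rw [hη]
          field_simp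
          ring
        rw [e1, e2, Real.sqrt_mul (by positivity), Real.sqrt_sq hs0.le]
      have e3 : (M / Real.exp 1)^(n+1) = M^(n+1) * Real.exp (-((((n+1:ℕ)):ℝ))) := by
        rw [div_pow, Real.exp_neg, ← Real.exp_one_pow, div_eq_mul_inv]
      have e1 : ((((n+1:ℕ)):ℝ)) = M := by rw [hM]; push_cast; ring
      rw [hfac, hkey, e3, e1]
      ring
end
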